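/- arXiv:1012.3062 — 9 statements merged into one kernel-verified Lean document; each statement's English description precedes it below -/
import Mathlib

section
/- For every prime p > P(m) and every integer n ≥ 1, a(m·pⁿ) = b(p)·a(m·p^{n−1}) − χ(p)·p^{k−1}·a(m·p^{n−2}), where a(m·p^{−1}) is interpreted as 0 when n = 1. -/
set_option maxHeartbeats 1000000


theorem coefficient_recursion_at_large_primes
    (k : ℕ) (hk : 2 ≤ k)
    (a b χ : ℕ → ℤ)
    (hχ : ∀ n : ℕ, χ n = -1 ∨ χ n = 0 ∨ χ n = 1)
    (C : ℝ) (hC : 1 < C)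
    (ha : ∀ n : ℕ, 1 ≤ n → |((a n : ℝ))| < C * (n : ℝ) ^ ((k : ℝ) / 2 - 1 / 5))
    (hb : ∀ n : ℕ, 1 ≤ n → |((b n : ℝ))| < C * (n : ℝ) ^ ((k : ℝ) / 2 - 1 / 5))
    (N₁ : ℕ)
    (hASD : ∀ p : ℕ, p.Prime → N₁ < p → ∀ n : ℕ, 1 ≤ n →
      ((p : ℤ) ^ ((k - 1) * (1 + padicValNat p n))) ∣
        (a (n * p) - b p * a n +
          χ p * (p : ℤ) ^ (k - 1) * (if p ∣ n then a (n / p) else 0)))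
    (m : ℕ) (hm : 1 ≤ m) (ham : a m ≠ 0)
    (P : ℕ) (hPN : N₁ < P)
    (hP : ∀ n : ℕ, P < n →
      3 * C ^ 2 * ((m : ℝ) ^ ((k : ℝ) / 2 - 1 / 5)) ^ 2 * (n : ℝ) ^ ((k : ℝ) / 2 - 1 / 5)
        < (n : ℝ) ^ ((k : ℝ) - 1))
    :
    ∀ p : ℕ, p.Prime → P < p → ∀ n : ℕ, 1 ≤ n →
      a (m * p ^ n) = b p * a (m * p ^ (n - 1)) -
        χ p * (p : ℤ) ^ (k - 1) * (if 2 ≤ n then a (m * p ^ (n - 2)) else 0) := by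
  -- abbreviations
  set α : ℝ := (k : ℝ) / 2 - 1 / 5 with hα
  have hk2 : (2 : ℝ) ≤ (k : ℝ) := by exact_mod_cast hk
  have hα0 : 0 ≤ α := by rw [hα]; linarith
  have hm1 : (1 : ℝ) ≤ (m : ℝ) := by exact_mod_cast hm
  have hmpos : (0 : ℝ) < (m : ℝ) := by linarith
  have hA1 : (1 : ℝ) ≤ (m : ℝ) ^ α := Real.one_le_rpow hm1 hα0
  have hC0 : (0 : ℝ) < C := by linarith
  -- first: m ≤ P
  have hmP : m ≤ P := by
    by_contra hcon
    push_neg at hcon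
    have h1 := hP m hcon
    have h2 : (m : ℝ) ^ ((k : ℝ) - 1) ≤ (m : ℝ) ^ (α + α + α) := by
      apply Real.rpow_le_rpow_of_exponent_le hm1
      rw [hα]; linarith
    rw [Real.rpow_add hmpos, Real.rpow_add hmpos] at h2
    have h3 : (m : ℝ) ^ ((k : ℝ) - 1) ≤ 3 * C ^ 2 * ((m : ℝ) ^ α) ^ 2 * (m : ℝ) ^ α := by
      calc (m : ℝ) ^ ((k : ℝ) - 1) ≤ (m:ℝ)^α * (m:ℝ)^α * (m:ℝ)^α := h2
        _ = 1 * (((m:ℝ)^α) ^ 2 * (m:ℝ)^α) := by ring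
        _ ≤ (3 * C ^ 2) * (((m:ℝ)^α) ^ 2 * (m:ℝ)^α) := by
            apply mul_le_mul_of_nonneg_right (by nlinarith) (by positivity)
        _ = 3 * C ^ 2 * ((m : ℝ) ^ α) ^ 2 * (m : ℝ) ^ α := by ring
    linarith
  intro p hp hpP n hn
  have hppos : 0 < p := hp.pos
  have hp2 : (2 : ℝ) ≤ (p : ℝ) := by exact_mod_cast hp.two_le
  have hpr : (0 : ℝ) < (p : ℝ) := by linarith
  have hpm : ¬ p ∣ m := by
    intro hd
    have := Nat.le_of_dvd (by omega) hd
    omega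
  haveI : Fact p.Prime := ⟨hp⟩
  -- the key divisibility
  have key := hASD p hp (by omega) (m * p ^ (n - 1))
    (Nat.one_le_iff_ne_zero.mpr (by positivity))
  have hval : padicValNat p (m * p ^ (n - 1)) = n - 1 := by
    rw [padicValNat.mul (by omega) (by positivity),
      padicValNat.eq_zero_of_not_dvd hpm, padicValNat.prime_pow, zero_add]
  rw [hval] at key
  have hidx : m * p ^ (n - 1) * p = m * p ^ n := by
    rw [mul_assoc, ← pow_succ]
    congr 2
    omega
  rw [hidx] at key
  have hone : 1 + (n - 1) = n := by omega
  rw [hone] at key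
  -- identify the if-term
  have hifeq : (if p ∣ m * p ^ (n - 1) then a (m * p ^ (n - 1) / p) else 0) =
      (if 2 ≤ n then a (m * p ^ (n - 2)) else 0) := by
    rcases Nat.lt_or_ge n 2 with h2 | h2
    · have hn1 : n = 1 := by omega
      subst hn1
      simp only [Nat.sub_self, pow_zero, mul_one]
      rw [if_neg hpm, if_neg (by omega)]
    · have hdvd : p ∣ m * p ^ (n - 1) := by
        apply Dvd.dvd.mul_left _ m
        exact dvd_pow_self p (by omega)
      rw [if_pos hdvd, if_pos h2]
      congr 2
      have : p ^ (n - 1) = p ^ (n - 2) * p := by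
        rw [← pow_succ]; congr 1; omega
      rw [this, ← mul_assoc, Nat.mul_div_cancel _ hppos]
  rw [hifeq] at key
  set T : ℤ := (if 2 ≤ n then a (m * p ^ (n - 2)) else 0) with hT
  set D : ℤ := a (m * p ^ n) - b p * a (m * p ^ (n - 1)) + χ p * (p : ℤ) ^ (k - 1) * T with hD
  -- size bound for coefficients
  have hbnd : ∀ j : ℕ, |((a (m * p ^ j) : ℝ))| < C * (m : ℝ) ^ α * (p : ℝ) ^ ((j : ℝ) * α) := by
    intro j
    have h1 := ha (m * p ^ j) (Nat.one_le_iff_ne_zero.mpr (by positivity))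
    have h2 : ((m * p ^ j : ℕ) : ℝ) ^ α = (m : ℝ) ^ α * (p : ℝ) ^ ((j : ℝ) * α) := by
      push_cast
      rw [Real.mul_rpow (le_of_lt hmpos) (by positivity),
        ← Real.rpow_natCast (p : ℝ) j, ← Real.rpow_mul (le_of_lt hpr)]
    rw [h2, ← mul_assoc] at h1
    exact h1
  have hQpos : ∀ x : ℝ, (0:ℝ) < (p : ℝ) ^ x := fun x => Real.rpow_pos_of_pos hpr x
  have hχ1 : |((χ p : ℝ))| ≤ 1 := by
    rcases hχ p with h | h | h <;> rw [h] <;> norm_num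
  -- bound on |D|
  have hDbound : |((D : ℝ))| < (p : ℝ) ^ ((n : ℝ) * ((k : ℝ) - 1)) := by
    have t1 := hbnd n
    have t2 := hbnd (n - 1)
    have t3 := hbnd (n - 2)
    have tb := hb p (by omega)
    -- rewrite exponents
    have e2 : (((n - 1 : ℕ) : ℝ)) = (n : ℝ) - 1 := by
      have : (1:ℕ) ≤ n := hn
      push_cast [this]; ring
    rw [e2] at t2
    -- term 2 bound
    have hT2 : |((b p : ℝ))| * |((a (m * p ^ (n - 1)) : ℝ))| <
        C ^ 2 * (m : ℝ) ^ α * (p : ℝ) ^ ((n : ℝ) * α) := by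
      have hbp0 : (0:ℝ) ≤ |((b p : ℝ))| := abs_nonneg _
      have ha0 : (0:ℝ) ≤ |((a (m * p ^ (n - 1)) : ℝ))| := abs_nonneg _
      calc |((b p : ℝ))| * |((a (m * p ^ (n - 1)) : ℝ))|
          < (C * (p : ℝ) ^ α) * (C * (m : ℝ) ^ α * (p : ℝ) ^ (((n : ℝ) - 1) * α)) := by
            apply mul_lt_mul' (le_of_lt tb) t2 ha0
            positivity
        _ = C ^ 2 * (m : ℝ) ^ α * ((p : ℝ) ^ α * (p : ℝ) ^ (((n : ℝ) - 1) * α)) := by ring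
        _ = C ^ 2 * (m : ℝ) ^ α * (p : ℝ) ^ ((n : ℝ) * α) := by
            rw [← Real.rpow_add hpr]; ring_nf
    -- term 3 bound
    have hT3 : |((χ p : ℝ))| * (p : ℝ) ^ (k - 1 : ℕ) * |((T : ℝ))| ≤
        C * (m : ℝ) ^ α * (p : ℝ) ^ ((n : ℝ) * α) := by
      rcases Nat.lt_or_ge n 2 with h2 | h2
      · have : T = 0 := by rw [hT, if_neg (by omega)]
        rw [this]
        simp only [Int.cast_zero, abs_zero, mul_zero]
        positivity
      · have hTv : T = a (m * p ^ (n - 2)) := by rw [hT, if_pos h2]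
        have e3 : (((n - 2 : ℕ) : ℝ)) = (n : ℝ) - 2 := by
          push_cast [h2]; ring
        rw [e3] at t3
        have hpk : ((p : ℝ) ^ (k - 1 : ℕ)) = (p : ℝ) ^ ((k : ℝ) - 1) := by
          rw [← Real.rpow_natCast (p : ℝ) (k - 1)]
          congr 1
          push_cast [Nat.cast_sub (by omega : 1 ≤ k)]
          ring
        calc |((χ p : ℝ))| * (p : ℝ) ^ (k - 1 : ℕ) * |((T : ℝ))|
            ≤ 1 * (p : ℝ) ^ (k - 1 : ℕ) * (C * (m : ℝ) ^ α * (p : ℝ) ^ (((n : ℝ) - 2) * α)) := by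
              apply mul_le_mul _ (by rw [hTv]; exact le_of_lt t3) (abs_nonneg _) (by positivity)
              apply mul_le_mul_of_nonneg_right hχ1 (by positivity)
          _ = C * (m : ℝ) ^ α * ((p : ℝ) ^ ((k : ℝ) - 1) * (p : ℝ) ^ (((n : ℝ) - 2) * α)) := by
              rw [hpk]; ring
          _ = C * (m : ℝ) ^ α * (p : ℝ) ^ (((k : ℝ) - 1) + ((n : ℝ) - 2) * α) := by
              rw [← Real.rpow_add hpr]
          _ ≤ C * (m : ℝ) ^ α * (p : ℝ) ^ ((n : ℝ) * α) := by
              apply mul_le_mul_of_nonneg_left _ (by positivity)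
              apply Real.rpow_le_rpow_of_exponent_le (by linarith)
              have : ((k : ℝ) - 1) ≤ 2 * α := by rw [hα]; linarith
              nlinarith
    -- combine
    have hsum : |((D : ℝ))| ≤ |((a (m * p ^ n) : ℝ))| +
        |((b p : ℝ))| * |((a (m * p ^ (n - 1)) : ℝ))| +
        |((χ p : ℝ))| * (p : ℝ) ^ (k - 1 : ℕ) * |((T : ℝ))| := by
      rw [hD]
      push_cast
      calc |((a (m * p ^ n) : ℝ)) - (b p : ℝ) * (a (m * p ^ (n - 1)) : ℝ) +
            (χ p : ℝ) * (p : ℝ) ^ (k - 1 : ℕ) * (T : ℝ)|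
          ≤ |((a (m * p ^ n) : ℝ)) - (b p : ℝ) * (a (m * p ^ (n - 1)) : ℝ)| +
            |(χ p : ℝ) * (p : ℝ) ^ (k - 1 : ℕ) * (T : ℝ)| := abs_add_le _ _
        _ ≤ |((a (m * p ^ n) : ℝ))| + |(b p : ℝ) * (a (m * p ^ (n - 1)) : ℝ)| +
            |(χ p : ℝ) * (p : ℝ) ^ (k - 1 : ℕ) * (T : ℝ)| := by
            linarith [abs_sub ((a (m * p ^ n) : ℝ)) ((b p : ℝ) * (a (m * p ^ (n - 1)) : ℝ))]
        _ = |((a (m * p ^ n) : ℝ))| + |((b p : ℝ))| * |((a (m * p ^ (n - 1)) : ℝ))| +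
            |((χ p : ℝ))| * (p : ℝ) ^ (k - 1 : ℕ) * |((T : ℝ))| := by
            rw [abs_mul, abs_mul, abs_mul, abs_of_nonneg (by positivity : (0:ℝ) ≤ (p : ℝ) ^ (k - 1 : ℕ))]
    -- final comparison using hP at p^n
    have hPn : P < p ^ n := lt_of_lt_of_le hpP (Nat.le_self_pow (by omega) p)
    have hfinal := hP (p ^ n) hPn
    have e4 : ((p ^ n : ℕ) : ℝ) ^ α = (p : ℝ) ^ ((n : ℝ) * α) := by
      push_cast
      rw [← Real.rpow_natCast (p : ℝ) n, ← Real.rpow_mul (le_of_lt hpr)]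
    have e5 : ((p ^ n : ℕ) : ℝ) ^ ((k : ℝ) - 1) = (p : ℝ) ^ ((n : ℝ) * ((k : ℝ) - 1)) := by
      push_cast
      rw [← Real.rpow_natCast (p : ℝ) n, ← Real.rpow_mul (le_of_lt hpr)]
    rw [e4, e5] at hfinal
    have hone_le : (1:ℝ) ≤ C * (m : ℝ) ^ α := by
      calc (1:ℝ) = 1 * 1 := by ring
        _ ≤ C * (m : ℝ) ^ α := mul_le_mul (le_of_lt hC) hA1 one_pos.le (by linarith)
    have hCA : C * (m : ℝ) ^ α ≤ C ^ 2 * ((m : ℝ) ^ α) ^ 2 := by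
      calc C * (m : ℝ) ^ α = (C * (m : ℝ) ^ α) * 1 := by ring
        _ ≤ (C * (m : ℝ) ^ α) * (C * (m : ℝ) ^ α) :=
            mul_le_mul_of_nonneg_left hone_le (by linarith)
        _ = C ^ 2 * ((m : ℝ) ^ α) ^ 2 := by ring
    have hC2A : C ^ 2 * (m : ℝ) ^ α ≤ C ^ 2 * ((m : ℝ) ^ α) ^ 2 := by
      calc C ^ 2 * (m : ℝ) ^ α = C ^ 2 * (m : ℝ) ^ α * 1 := by ring
        _ ≤ C ^ 2 * (m : ℝ) ^ α * (m : ℝ) ^ α :=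
            mul_le_mul_of_nonneg_left hA1 (by positivity)
        _ = C ^ 2 * ((m : ℝ) ^ α) ^ 2 := by ring
    have hQn0 : (0:ℝ) < (p : ℝ) ^ ((n : ℝ) * α) := hQpos _
    have s1 : |((a (m * p ^ n) : ℝ))| < C ^ 2 * ((m : ℝ) ^ α) ^ 2 * (p : ℝ) ^ ((n : ℝ) * α) :=
      lt_of_lt_of_le t1 (mul_le_mul_of_nonneg_right hCA (le_of_lt hQn0))
    have s2 : |((b p : ℝ))| * |((a (m * p ^ (n - 1)) : ℝ))| <
        C ^ 2 * ((m : ℝ) ^ α) ^ 2 * (p : ℝ) ^ ((n : ℝ) * α) :=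
      lt_of_lt_of_le hT2 (mul_le_mul_of_nonneg_right hC2A (le_of_lt hQn0))
    have s3 : |((χ p : ℝ))| * (p : ℝ) ^ (k - 1 : ℕ) * |((T : ℝ))| ≤
        C ^ 2 * ((m : ℝ) ^ α) ^ 2 * (p : ℝ) ^ ((n : ℝ) * α) :=
      le_trans hT3 (mul_le_mul_of_nonneg_right hCA (le_of_lt hQn0))
    linarith
  -- convert the bound to ℤ
  have hM : (((p : ℤ) ^ ((k - 1) * n) : ℤ) : ℝ) = (p : ℝ) ^ ((n : ℝ) * ((k : ℝ) - 1)) := by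
    push_cast
    rw [← Real.rpow_natCast (p : ℝ) ((k - 1) * n)]
    congr 1
    push_cast [Nat.cast_sub (by omega : 1 ≤ k)]
    ring
  have hDlt : |D| < (p : ℤ) ^ ((k - 1) * n) := by
    have : |((D : ℝ))| < (((p : ℤ) ^ ((k - 1) * n) : ℤ) : ℝ) := by rw [hM]; exact hDbound
    exact_mod_cast (by rwa [← Int.cast_abs] at this : ((|D| : ℤ) : ℝ) < (((p : ℤ) ^ ((k - 1) * n) : ℤ) : ℝ))
  have hDzero : D = 0 := Int.eq_zero_of_abs_lt_dvd (by rw [hD]; exact key) hDlt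
  rw [hD] at hDzero
  rw [hT] at hDzero
  linarith [hDzero]
end

section
/- Assume additionally that b(1) = 1 and that for every prime p and every e ≥ 1 one has b(p^{e+1}) = b(p)·b(p^e) − χ(p)·p^{k−1}·b(p^{e−1}) (the Hecke recursion satisfied by the coefficients of a normalized newform of weight k and nebentypus χ). Then for every prime p > P(m) with p coprime to m and every integer n ≥ 0, a(m·pⁿ) = b(pⁿ)·a(m). -/
theorem coefficients_agree_on_prime_powers
    (k : ℕ) (hk : 2 ≤ k)
    (a b χ : ℕ → ℤ)
    (hχ : ∀ n : ℕ, χ n = -1 ∨ χ n = 0 ∨ χ n = 1)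
    (C : ℝ) (hC : 1 < C)
    (ha : ∀ n : ℕ, 1 ≤ n → |((a n : ℝ))| < C * (n : ℝ) ^ ((k : ℝ) / 2 - 1 / 5))
    (hb : ∀ n : ℕ, 1 ≤ n → |((b n : ℝ))| < C * (n : ℝ) ^ ((k : ℝ) / 2 - 1 / 5))
    (N₁ : ℕ)
    (hASD : ∀ p : ℕ, p.Prime → N₁ < p → ∀ n : ℕ, 1 ≤ n →
      ((p : ℤ) ^ ((k - 1) * (1 + padicValNat p n))) ∣
        (a (n * p) - b p * a n +
          χ p * (p : ℤ) ^ (k - 1) * (if p ∣ n then a (n / p) else 0)))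
    (m : ℕ) (hm : 1 ≤ m) (ham : a m ≠ 0)
    (P : ℕ) (hPN : N₁ < P)
    (hP : ∀ n : ℕ, P < n →
      3 * C ^ 2 * ((m : ℝ) ^ ((k : ℝ) / 2 - 1 / 5)) ^ 2 * (n : ℝ) ^ ((k : ℝ) / 2 - 1 / 5)
        < (n : ℝ) ^ ((k : ℝ) - 1))
    (hb1 : b 1 = 1)
    (hbrec : ∀ p : ℕ, p.Prime → ∀ e : ℕ, 1 ≤ e →
      b (p ^ (e + 1)) = b p * b (p ^ e) - χ p * (p : ℤ) ^ (k - 1) * b (p ^ (e - 1)))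
    :
    ∀ p : ℕ, p.Prime → P < p → Nat.Coprime p m → ∀ n : ℕ,
      a (m * p ^ n) = b (p ^ n) * a m := by
  intro p hp hPp hcop
  have hp2 : 2 ≤ p := hp.two_le
  have hppos : 0 < p := by omega
  have hN₁p : N₁ < p := lt_trans hPN hPp
  have hpm : ¬ p ∣ m := (Nat.Prime.coprime_iff_not_dvd hp).mp hcop
  have hk1 : 1 ≤ k := by omega
  have hepos : (0:ℝ) ≤ (k : ℝ) / 2 - 1 / 5 := by
    have : (2:ℝ) ≤ (k:ℝ) := by exact_mod_cast hk
    linarith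
  have hmpos : (0:ℝ) < (m:ℝ) := by exact_mod_cast hm
  have hm1 : (1:ℝ) ≤ (m:ℝ) := by exact_mod_cast hm
  have hme : (1:ℝ) ≤ (m:ℝ) ^ ((k:ℝ)/2 - 1/5) := Real.one_le_rpow hm1 hepos
  have hC0 : (0:ℝ) < C := lt_trans one_pos hC
  -- size lemma
  have hsize : ∀ n : ℕ, 1 ≤ n →
      ((p : ℤ) ^ ((k - 1) * n)) ∣ (a (m * p ^ n) - b (p ^ n) * a m) →
      a (m * p ^ n) = b (p ^ n) * a m := by
    intro n hn hdvd
    have hpn1 : 1 ≤ p ^ n := Nat.one_le_pow _ _ hppos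
    have hmpn : 1 ≤ m * p ^ n := Nat.one_le_iff_ne_zero.mpr (by positivity)
    have hPpn : P < p ^ n := lt_of_lt_of_le hPp (Nat.le_self_pow (by omega) p)
    have h1 := ha (m * p ^ n) hmpn
    have h2 := hb (p ^ n) hpn1
    have h3 := ha m hm
    have hXpos : (0:ℝ) ≤ ((p ^ n : ℕ) : ℝ) ^ ((k:ℝ)/2 - 1/5) :=
      Real.rpow_nonneg (by positivity) _
    have hmul : ((m * p ^ n : ℕ) : ℝ) ^ ((k:ℝ)/2 - 1/5)
        = (m:ℝ) ^ ((k:ℝ)/2 - 1/5) * ((p ^ n : ℕ) : ℝ) ^ ((k:ℝ)/2 - 1/5) := by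
      push_cast
      rw [Real.mul_rpow (le_of_lt hmpos) (by positivity)]
    have habs : |((a (m * p ^ n) : ℝ)) - (b (p ^ n) : ℝ) * (a m : ℝ)|
        < 3 * C ^ 2 * ((m:ℝ) ^ ((k:ℝ)/2 - 1/5)) ^ 2 * ((p ^ n : ℕ) : ℝ) ^ ((k:ℝ)/2 - 1/5) := by
      have hb1' : |(b (p ^ n) : ℝ) * (a m : ℝ)|
          < (C * ((p ^ n : ℕ) : ℝ) ^ ((k:ℝ)/2 - 1/5)) * (C * (m:ℝ) ^ ((k:ℝ)/2 - 1/5)) := by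
        rw [abs_mul]
        exact mul_lt_mul'' h2 h3 (abs_nonneg _) (abs_nonneg _)
      have htri := abs_sub ((a (m * p ^ n) : ℝ)) ((b (p ^ n) : ℝ) * (a m : ℝ))
      have hsum : |((a (m * p ^ n) : ℝ))| + |(b (p ^ n) : ℝ) * (a m : ℝ)|
          < (C + C ^ 2) * ((m:ℝ) ^ ((k:ℝ)/2 - 1/5) *
              ((p ^ n : ℕ) : ℝ) ^ ((k:ℝ)/2 - 1/5)) := by
        have := add_lt_add h1 hb1'
        rw [hmul] at this
        calc |((a (m * p ^ n) : ℝ))| + |(b (p ^ n) : ℝ) * (a m : ℝ)|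
            < C * ((m:ℝ) ^ ((k:ℝ)/2 - 1/5) * ((p ^ n : ℕ) : ℝ) ^ ((k:ℝ)/2 - 1/5)) +
              (C * ((p ^ n : ℕ) : ℝ) ^ ((k:ℝ)/2 - 1/5)) * (C * (m:ℝ) ^ ((k:ℝ)/2 - 1/5)) := this
          _ = (C + C ^ 2) * ((m:ℝ) ^ ((k:ℝ)/2 - 1/5) *
              ((p ^ n : ℕ) : ℝ) ^ ((k:ℝ)/2 - 1/5)) := by ring
      have hcoef : (C + C ^ 2) * ((m:ℝ) ^ ((k:ℝ)/2 - 1/5) *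
              ((p ^ n : ℕ) : ℝ) ^ ((k:ℝ)/2 - 1/5))
          ≤ 3 * C ^ 2 * ((m:ℝ) ^ ((k:ℝ)/2 - 1/5)) ^ 2 * ((p ^ n : ℕ) : ℝ) ^ ((k:ℝ)/2 - 1/5) := by
        have hCC : C ≤ C ^ 2 := by nlinarith
        have hc1 : C + C ^ 2
            ≤ 3 * C ^ 2 * (m:ℝ) ^ ((k:ℝ)/2 - 1/5) := by nlinarith
        have := mul_le_mul_of_nonneg_right hc1
          (mul_nonneg (by positivity : (0:ℝ) ≤ (m:ℝ) ^ ((k:ℝ)/2 - 1/5)) hXpos)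
        calc (C + C ^ 2) * ((m:ℝ) ^ ((k:ℝ)/2 - 1/5) *
              ((p ^ n : ℕ) : ℝ) ^ ((k:ℝ)/2 - 1/5))
            ≤ 3 * C ^ 2 * (m:ℝ) ^ ((k:ℝ)/2 - 1/5) * ((m:ℝ) ^ ((k:ℝ)/2 - 1/5) *
              ((p ^ n : ℕ) : ℝ) ^ ((k:ℝ)/2 - 1/5)) := this
          _ = 3 * C ^ 2 * ((m:ℝ) ^ ((k:ℝ)/2 - 1/5)) ^ 2 * ((p ^ n : ℕ) : ℝ) ^ ((k:ℝ)/2 - 1/5) := by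
              ring
      calc |((a (m * p ^ n) : ℝ)) - (b (p ^ n) : ℝ) * (a m : ℝ)|
          ≤ |((a (m * p ^ n) : ℝ))| + |(b (p ^ n) : ℝ) * (a m : ℝ)| := abs_sub _ _
        _ < _ := lt_of_lt_of_le hsum hcoef
    have hfin : |((a (m * p ^ n) : ℝ)) - (b (p ^ n) : ℝ) * (a m : ℝ)|
        < ((p ^ n : ℕ) : ℝ) ^ ((k:ℝ) - 1) := lt_trans habs (hP (p ^ n) hPpn)
    have hrp : ((p ^ n : ℕ) : ℝ) ^ ((k:ℝ) - 1) = (((p : ℤ) ^ ((k - 1) * n) : ℤ) : ℝ) := by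
      have : ((k:ℝ) - 1) = ((k - 1 : ℕ) : ℝ) := by
        rw [Nat.cast_sub hk1]; norm_num
      rw [this, Real.rpow_natCast]
      push_cast
      rw [← pow_mul, mul_comm n (k-1)]
    rw [hrp] at hfin
    have habsZ : |a (m * p ^ n) - b (p ^ n) * a m| < (p : ℤ) ^ ((k - 1) * n) := by
      have := hfin
      rw [← Int.cast_mul, ← Int.cast_sub, ← Int.cast_abs] at this
      exact_mod_cast this
    have := Int.eq_zero_of_abs_lt_dvd hdvd habsZ
    linarith [this]
  -- ASD step lemma
  have hstep : ∀ n : ℕ, a (m * p ^ n) = b (p ^ n) * a m →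
      (n = 0 ∨ a (m * p ^ (n - 1)) = b (p ^ (n - 1)) * a m) →
      a (m * p ^ (n + 1)) = b (p ^ (n + 1)) * a m := by
    intro n hSn hSn'
    have hmpn : 1 ≤ m * p ^ n := Nat.one_le_iff_ne_zero.mpr
      (by positivity)
    have hval : padicValNat p (m * p ^ n) = n := by
      haveI : Fact p.Prime := ⟨hp⟩
      rw [padicValNat.mul (by omega) (by positivity), padicValNat.eq_zero_of_not_dvd hpm,
        padicValNat.prime_pow]
      omega
    have hdvd := hASD p hp hN₁p (m * p ^ n) hmpn
    rw [hval] at hdvd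
    have harg : m * p ^ n * p = m * p ^ (n + 1) := by ring
    rw [harg] at hdvd
    rcases n with _ | n'
    · -- n = 0
      rw [if_neg (by simpa using hpm)] at hdvd
      apply hsize 1 le_rfl
      rw [show m * p ^ 0 = m from by simp] at hdvd
      have h : a (m * p ^ (0 + 1)) - b p * a m + χ p * (p:ℤ) ^ (k - 1) * 0
          = a (m * p ^ 1) - b (p ^ 1) * a m := by rw [pow_one]; ring
      rw [h] at hdvd
      simpa using hdvd
    · -- n = n' + 1
      have hSn'' : a (m * p ^ n') = b (p ^ n') * a m := by
        rcases hSn' with h | h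
        · omega
        · simpa using h
      have hpd : p ∣ m * p ^ (n' + 1) := Dvd.dvd.mul_left (dvd_pow_self p (by omega)) m
      rw [if_pos hpd] at hdvd
      have hdivarg : m * p ^ (n' + 1) / p = m * p ^ n' := by
        rw [pow_succ, ← mul_assoc, Nat.mul_div_cancel _ hppos]
      rw [hdivarg, hSn, hSn''] at hdvd
      have hbr := hbrec p hp (n' + 1) (by omega)
      simp only [Nat.add_sub_cancel] at hbr
      have heq : a (m * p ^ (n' + 1 + 1)) - b p * (b (p ^ (n' + 1)) * a m) +
            χ p * (p:ℤ) ^ (k - 1) * (b (p ^ n') * a m)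
          = a (m * p ^ (n' + 1 + 1)) - b (p ^ (n' + 1 + 1)) * a m := by
        rw [hbr]; ring
      rw [heq] at hdvd
      have : (k - 1) * (1 + (n' + 1)) = (k - 1) * (n' + 1 + 1) := by ring
      rw [this] at hdvd
      exact hsize (n' + 1 + 1) (by omega) hdvd
  -- main induction
  intro n
  induction n using Nat.strong_induction_on with
  | _ n ih =>
    rcases n with _ | n'
    · simp [hb1]
    · exact hstep n' (ih n' (by omega))
        (by rcases n' with _ | n''
            · exact Or.inl rfl
            · exact Or.inr (by simpa using ih n'' (by omega)))
end

section
/- Assume additionally that b(1) = 1 and that for every prime p and every e ≥ 1 one has b(p^{e+1}) = b(p)·b(p^e) − χ(p)·p^{k−1}·b(p^{e−1}). Let p₁, …, p_r (r ≥ 1) be distinct primes, each greater than P(m) and coprime to m, and let e₁, …, e_r ≥ 0 be integers. Then a(m)·a(m·p₁^{e₁}⋯p_r^{e_r}) = a(m·p₁^{e₁}⋯p_{r−1}^{e_{r−1}})·a(m·p_r^{e_r}). -/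
theorem asd_key
    (k : ℕ) (hk : 2 ≤ k)
    (a b χ : ℕ → ℤ)
    (C : ℝ) (hC : 1 < C)
    (ha : ∀ n : ℕ, 1 ≤ n → |((a n : ℝ))| < C * (n : ℝ) ^ ((k : ℝ) / 2 - 1 / 5))
    (hb : ∀ n : ℕ, 1 ≤ n → |((b n : ℝ))| < C * (n : ℝ) ^ ((k : ℝ) / 2 - 1 / 5))
    (N₁ : ℕ)
    (hASD : ∀ p : ℕ, p.Prime → N₁ < p → ∀ n : ℕ, 1 ≤ n →
      ((p : ℤ) ^ ((k - 1) * (1 + padicValNat p n))) ∣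
        (a (n * p) - b p * a n +
          χ p * (p : ℤ) ^ (k - 1) * (if p ∣ n then a (n / p) else 0)))
    (m : ℕ) (hm : 1 ≤ m)
    (P : ℕ) (hPN : N₁ < P)
    (hP : ∀ n : ℕ, P < n →
      3 * C ^ 2 * ((m : ℝ) ^ ((k : ℝ) / 2 - 1 / 5)) ^ 2 * (n : ℝ) ^ ((k : ℝ) / 2 - 1 / 5)
        < (n : ℝ) ^ ((k : ℝ) - 1))
    (hb1 : b 1 = 1)
    (hbrec : ∀ p : ℕ, p.Prime → ∀ e : ℕ, 1 ≤ e →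
      b (p ^ (e + 1)) = b p * b (p ^ e) - χ p * (p : ℤ) ^ (k - 1) * b (p ^ (e - 1)))
    (r : ℕ) (p : Fin (r + 1) → ℕ)
    (hpinj : Function.Injective p)
    (hpprime : ∀ i, (p i).Prime)
    (hpgt : ∀ i, P < p i)
    (hpcop : ∀ i, Nat.Coprime (p i) m) :
    ∀ n : ℕ, ∀ e : Fin (r + 1) → ℕ, (∑ i, e i) = n →
      a (m * ∏ i, p i ^ e i) = a m * ∏ i, b (p i ^ e i) := by
  have hppos : ∀ i, 0 < p i := fun i => (hpprime i).pos
  -- product update helper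
  have hprod_update : ∀ (e : Fin (r+1) → ℕ) (i : Fin (r+1)) (f : ℕ), e i = f + 1 →
      (∏ j, p j ^ (Function.update e i f) j) * p i = ∏ j, p j ^ e j := by
    intro e i f hef
    rw [← Finset.mul_prod_erase Finset.univ (fun j => p j ^ (Function.update e i f) j)
          (Finset.mem_univ i),
        ← Finset.mul_prod_erase Finset.univ (fun j => p j ^ e j) (Finset.mem_univ i)]
    have h1 : ∏ j ∈ Finset.univ.erase i, p j ^ (Function.update e i f) j
        = ∏ j ∈ Finset.univ.erase i, p j ^ e j :=
      Finset.prod_congr rfl (fun j hj => by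
        rw [Function.update_of_ne (Finset.ne_of_mem_erase hj)])
    rw [h1, Function.update_self, hef, pow_succ]
    ring
  have hsum_update : ∀ (e : Fin (r+1) → ℕ) (i : Fin (r+1)) (f : ℕ), e i = f + 1 →
      (∑ j, (Function.update e i f) j) + 1 = ∑ j, e j := by
    intro e i f hef
    rw [Finset.sum_update_of_mem (Finset.mem_univ i),
        ← Finset.add_sum_erase Finset.univ e (Finset.mem_univ i), hef]
    have : (Finset.univ : Finset (Fin (r+1))) \ {i} = Finset.univ.erase i := by
      rw [Finset.erase_eq]
    rw [this]
    omega
  intro n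
  induction n using Nat.strong_induction_on with
  | _ n ih =>
    intro e hsum
    rcases Nat.eq_zero_or_pos n with hn0 | hnpos
    · subst hn0
      have he : ∀ i, e i = 0 := by
        intro i
        exact Finset.sum_eq_zero_iff.mp hsum i (Finset.mem_univ i)
      simp [he, hb1]
    · -- inductive step
      have ih' : ∀ n' < n, ∀ e : Fin (r + 1) → ℕ, (∑ i, e i) = n' →
          a (m * ∏ i, p i ^ e i) = a m * ∏ i, b (p i ^ e i) := ih
      have hdvd : ∀ i : Fin (r+1), ((p i : ℤ)) ^ ((k-1) * e i) ∣
          (a (m * ∏ j, p j ^ e j) - a m * ∏ j, b (p j ^ e j)) := by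
        intro i
        rcases Nat.eq_zero_or_pos (e i) with he0 | hei
        · simp [he0]
        obtain ⟨f, hf⟩ : ∃ f, e i = f + 1 := ⟨e i - 1, by omega⟩
        set e' := Function.update e i f with he'def
        have he'i : e' i = f := Function.update_self i f e
        have hsum' : (∑ j, e' j) + 1 = n := by rw [hsum_update e i f hf]; exact hsum
        have hIH' : a (m * ∏ j, p j ^ e' j) = a m * ∏ j, b (p j ^ e' j) :=
          ih' (∑ j, e' j) (by omega) e' rfl
        set n₀ := m * ∏ j, p j ^ e' j with hn₀def
        have hprodpos : 0 < ∏ j, p j ^ e' j :=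
          Finset.prod_pos (fun j _ => pow_pos (hppos j) _)
        have hn₀pos : 1 ≤ n₀ := Nat.one_le_iff_ne_zero.mpr (by positivity)
        have hmulN : n₀ * p i = m * ∏ j, p j ^ e j := by
          rw [hn₀def, mul_assoc, hprod_update e i f hf]
        -- p i ^ f divides n₀
        have hpfdvd : p i ^ f ∣ n₀ := by
          rw [hn₀def]
          apply Dvd.dvd.mul_left
          refine dvd_trans ?_ (Finset.dvd_prod_of_mem (fun j => p j ^ e' j) (Finset.mem_univ i))
          show p i ^ f ∣ p i ^ e' i
          rw [he'i]
        have hvge : f ≤ padicValNat (p i) n₀ := by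
          rw [← Nat.factorization_def n₀ (hpprime i)]
          exact (Nat.Prime.pow_dvd_iff_le_factorization (hpprime i) (by omega)).mp hpfdvd
        have hdvd1 : (p i:ℤ) ^ ((k-1) * e i) ∣
            (a (n₀ * p i) - b (p i) * a n₀ +
              χ (p i) * (p i:ℤ)^(k-1) * (if p i ∣ n₀ then a (n₀ / p i) else 0)) := by
          refine dvd_trans (pow_dvd_pow _ ?_) (hASD (p i) (hpprime i) (lt_trans hPN (hpgt i)) n₀ hn₀pos)
          exact Nat.mul_le_mul_left _ (by omega)
        -- split b-products
        have hsplit : ∀ (E : Fin (r+1) → ℕ) (i : Fin (r+1)),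
            ∏ j, b (p j ^ E j) = b (p i ^ E i) * ∏ j ∈ Finset.univ.erase i, b (p j ^ E j) :=
          fun E i => (Finset.mul_prod_erase _ _ (Finset.mem_univ i)).symm
        have herase : ∀ (f : ℕ),
            ∏ j ∈ Finset.univ.erase i, b (p j ^ (Function.update e i f) j)
              = ∏ j ∈ Finset.univ.erase i, b (p j ^ e j) :=
          fun f => Finset.prod_congr rfl (fun j hj => by
            rw [Function.update_of_ne (Finset.ne_of_mem_erase hj)])
        set R := ∏ j ∈ Finset.univ.erase i, b (p j ^ e j) with hRdef
        have hBsplit : ∏ j, b (p j ^ e j) = b (p i ^ (f+1)) * R := by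
          rw [hsplit e i, hf]
        have hB'split : ∏ j, b (p j ^ e' j) = b (p i ^ f) * R := by
          rw [hsplit e' i, he'i, he'def, hRdef, herase]
        rcases Nat.eq_zero_or_pos f with hf0 | hfpos
        · -- e i = 1, if-branch is 0
          subst hf0
          have hnd : ¬ p i ∣ n₀ := by
            intro hd
            rcases (Nat.Prime.dvd_mul (hpprime i)).mp hd with h | h
            · exact (Nat.Prime.coprime_iff_not_dvd (hpprime i)).mp (hpcop i) h
            · obtain ⟨j, _, hj⟩ := (Nat.Prime.prime (hpprime i)).exists_mem_finset_dvd h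
              have hij : p i ∣ p j := (Nat.Prime.dvd_of_dvd_pow (hpprime i)) hj
              have : p i = p j := ((Nat.prime_dvd_prime_iff_eq (hpprime i) (hpprime j)).mp hij)
              have hji : j = i := hpinj this.symm
              simp only [hji, he'i, pow_zero, Nat.dvd_one] at hj
              exact (hpprime i).ne_one hj
          rw [if_neg hnd] at hdvd1
          have hexpr : a (m * ∏ j, p j ^ e j) - a m * ∏ j, b (p j ^ e j)
              = a (n₀ * p i) - b (p i) * a n₀ + χ (p i) * (p i:ℤ)^(k-1) * 0 := by
            rw [hmulN, hBsplit, hIH', hB'split]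
            rw [pow_zero, hb1, zero_add, pow_one]
            ring
          rw [hexpr]; exact hdvd1
        · -- f = g + 1
          obtain ⟨g, hg⟩ : ∃ g, f = g + 1 := ⟨f - 1, by omega⟩
          set e'' := Function.update e i g with he''def
          have he'e'' : Function.update e' i g = e'' := by
            rw [he'def, he''def]; exact Function.update_idem _ _ _
          have hsum'' : (∑ j, e'' j) + 1 = ∑ j, e' j := by
            rw [← he'e'']
            exact hsum_update e' i g (by rw [he'i, hg])
          have hIH'' : a (m * ∏ j, p j ^ e'' j) = a m * ∏ j, b (p j ^ e'' j) :=
            ih' (∑ j, e'' j) (by omega) e'' rfl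
          have he''i : e'' i = g := Function.update_self i g e
          have hB''split : ∏ j, b (p j ^ e'' j) = b (p i ^ g) * R := by
            rw [hsplit e'' i, he''i, he''def, herase]
          have hdvdpi : p i ∣ n₀ := by
            rw [hn₀def]
            apply Dvd.dvd.mul_left
            refine dvd_trans ?_ (Finset.dvd_prod_of_mem (fun j => p j ^ e' j) (Finset.mem_univ i))
            show p i ∣ p i ^ e' i
            rw [he'i, hg]
            exact dvd_pow_self _ (by omega)
          have hdiveq : n₀ / p i = m * ∏ j, p j ^ e'' j := by
            have hh : (m * ∏ j, p j ^ e'' j) * p i = n₀ := by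
              rw [hn₀def, mul_assoc, ← he'e'', hprod_update e' i g (by rw [he'i, hg])]
            rw [← hh, Nat.mul_div_cancel _ (hppos i)]
          rw [if_pos hdvdpi, hdiveq] at hdvd1
          have hrec := hbrec (p i) (hpprime i) f (by omega)
          rw [hg] at hrec
          simp only [Nat.add_sub_cancel] at hrec
          have hexpr : a (m * ∏ j, p j ^ e j) - a m * ∏ j, b (p j ^ e j)
              = a (n₀ * p i) - b (p i) * a n₀ +
                χ (p i) * (p i:ℤ)^(k-1) * a (m * ∏ j, p j ^ e'' j) := by
            rw [hmulN, hBsplit, hIH', hB'split, hIH'', hB''split, hg, hrec]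
            ring
          rw [hexpr]; exact hdvd1

      have hnz : ∃ i, e i ≠ 0 := by
        by_contra hcon
        push_neg at hcon
        rw [Finset.sum_eq_zero (fun i _ => hcon i)] at hsum
        omega
      have hσ0 : (0:ℝ) ≤ (k:ℝ)/2 - 1/5 := by
        have h2 : (2:ℝ) ≤ (k:ℝ) := by exact_mod_cast hk
        linarith
      set σ := (k:ℝ)/2 - 1/5 with hσdef
      have hC0 : (0:ℝ) < C := lt_trans one_pos hC
      have hC1 : (1:ℝ) ≤ C := hC.le
      have hm1 : (1:ℝ) ≤ (m:ℝ) := by exact_mod_cast hm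
      have hA1 : (1:ℝ) ≤ (m:ℝ) ^ σ := Real.one_le_rpow hm1 hσ0
      have hA0 : (0:ℝ) < (m:ℝ) ^ σ := lt_of_lt_of_le one_pos hA1
      -- modulus divides D
      have hpair : ((Finset.univ : Finset (Fin (r+1))) : Set (Fin (r+1))).Pairwise
          (Function.onFun IsCoprime fun i => (p i:ℤ)^((k-1)*e i)) := by
        intro i _ j _ hij
        have hco : IsCoprime ((p i:ℤ)) ((p j:ℤ)) := by
          rw [Nat.isCoprime_iff_coprime]
          exact (Nat.coprime_primes (hpprime i) (hpprime j)).mpr (fun h => hij (hpinj h))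
        exact hco.pow
      have hdall : (∏ i, (p i:ℤ)^((k-1)*e i)) ∣
          (a (m * ∏ j, p j ^ e j) - a m * ∏ j, b (p j ^ e j)) :=
        Finset.prod_dvd_of_coprime hpair (fun i _ => hdvd i)
      -- setup
      set t := Finset.univ.filter (fun i : Fin (r+1) => e i ≠ 0) with htdef
      have htne : t.Nonempty := by
        obtain ⟨i, hi⟩ := hnz
        exact ⟨i, by simp [htdef, hi]⟩
      set c := t.card with hcdef
      have hc1 : 1 ≤ c := Finset.card_pos.mpr htne
      set X : Fin (r+1) → ℝ := fun i => ((p i ^ e i : ℕ) : ℝ) with hXdef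
      have hX1 : ∀ i, (1:ℝ) ≤ X i := by
        intro i
        have h : 1 ≤ p i ^ e i := Nat.one_le_iff_ne_zero.mpr (pow_pos (hppos i) _).ne'
        show (1:ℝ) ≤ ((p i ^ e i : ℕ) : ℝ)
        exact_mod_cast h
      have hX0 : ∀ i, (0:ℝ) < X i := fun i => lt_of_lt_of_le one_pos (hX1 i)
      -- prod over t only
      have hoffX : ∀ i ∈ Finset.univ.filter (fun i : Fin (r+1) => ¬ e i ≠ 0), X i = 1 := by
        intro i hi
        have : e i = 0 := by simpa using hi
        simp [hXdef, this]
      have hNprod : ((∏ j, p j ^ e j : ℕ) : ℝ) = ∏ j ∈ t, X j := by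
        push_cast
        rw [← Finset.prod_filter_mul_prod_filter_not Finset.univ (fun i => e i ≠ 0)
              (fun j => ((p j : ℝ)) ^ e j)]
        have h1 : ∏ j ∈ Finset.univ.filter (fun i : Fin (r+1) => ¬ e i ≠ 0),
            ((p j:ℝ)) ^ e j = 1 := by
          apply Finset.prod_eq_one
          intro j hj
          have : e j = 0 := by simpa using hj
          simp [this]
        rw [h1, mul_one]
        apply Finset.prod_congr rfl
        intro j _
        simp [hXdef]
      set Q := ∏ j ∈ t, X j ^ σ with hQdef
      have hQpos : (0:ℝ) < Q := Finset.prod_pos (fun j _ => Real.rpow_pos_of_pos (hX0 j) σ)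
      have hNσ : ((∏ j, p j ^ e j : ℕ):ℝ) ^ σ = Q := by
        rw [hNprod, hQdef, Real.finset_prod_rpow t X (fun i _ => (hX0 i).le) σ]
      -- bound on B
      have hBbd : |((∏ j, b (p j ^ e j) : ℤ) : ℝ)| ≤ C ^ c * Q := by
        have hcast : ((∏ j, b (p j ^ e j) : ℤ) : ℝ) = ∏ j, ((b (p j ^ e j) : ℤ) : ℝ) := by
          push_cast; ring
        rw [hcast, Finset.abs_prod]
        rw [← Finset.prod_filter_mul_prod_filter_not Finset.univ (fun i => e i ≠ 0)
              (fun j => |((b (p j ^ e j) : ℤ) : ℝ)|)]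
        have hoff : ∏ j ∈ Finset.univ.filter (fun i : Fin (r+1) => ¬ e i ≠ 0),
            |((b (p j ^ e j) : ℤ) : ℝ)| = 1 := by
          apply Finset.prod_eq_one
          intro j hj
          have : e j = 0 := by simpa using hj
          simp [this, hb1]
        rw [hoff, mul_one]
        have : ∏ j ∈ t, |((b (p j ^ e j) : ℤ) : ℝ)| ≤ ∏ j ∈ t, (C * X j ^ σ) := by
          apply Finset.prod_le_prod (fun _ _ => abs_nonneg _)
          intro j _
          have h1 : 1 ≤ p j ^ e j := Nat.one_le_iff_ne_zero.mpr (pow_pos (hppos j) _).ne'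
          exact (hb _ h1).le
        calc ∏ j ∈ t, |((b (p j ^ e j) : ℤ) : ℝ)| ≤ ∏ j ∈ t, (C * X j ^ σ) := this
          _ = C ^ c * Q := by rw [Finset.prod_mul_distrib, Finset.prod_const, hQdef, hcdef]
      -- bound on a(mN)
      have hprodpos : 0 < ∏ j, p j ^ e j :=
        Finset.prod_pos (fun j _ => pow_pos (hppos j) _)
      have hmN1 : 1 ≤ m * ∏ j, p j ^ e j :=
        Nat.one_le_iff_ne_zero.mpr (Nat.mul_pos (by omega) hprodpos).ne' 
      have haN : |((a (m * ∏ j, p j ^ e j) : ℤ) : ℝ)| < C * (m:ℝ)^σ * Q := by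
        have h := ha _ hmN1
        have hcast : ((m * ∏ j, p j ^ e j : ℕ) : ℝ) = (m:ℝ) * ((∏ j, p j ^ e j : ℕ):ℝ) := by
          push_cast; ring
        rw [hcast, Real.mul_rpow (by positivity) (by positivity), hNσ] at h
        calc |((a (m * ∏ j, p j ^ e j) : ℤ) : ℝ)| < C * ((m:ℝ)^σ * Q) := h
          _ = C * (m:ℝ)^σ * Q := by ring
      have ham : |((a m : ℤ) : ℝ)| ≤ C * (m:ℝ)^σ := (ha m hm).le
      -- modulus as real
      have hmodcast : ((∏ i, (p i:ℤ)^((k-1)*e i) : ℤ) : ℝ) = ∏ j ∈ t, X j ^ (k-1) := by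
        push_cast
        rw [← Finset.prod_filter_mul_prod_filter_not Finset.univ (fun i => e i ≠ 0)
              (fun j => ((p j:ℝ)) ^ ((k-1) * e j))]
        have hoff : ∏ j ∈ Finset.univ.filter (fun i : Fin (r+1) => ¬ e i ≠ 0),
            ((p j:ℝ)) ^ ((k-1) * e j) = 1 := by
          apply Finset.prod_eq_one
          intro j hj
          have : e j = 0 := by simpa using hj
          simp [this]
        rw [hoff, mul_one]
        apply Finset.prod_congr rfl
        intro j _
        rw [hXdef]
        push_cast
        rw [mul_comm (k-1) (e j), pow_mul]
      -- hP applied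
      have hPt : ∀ j ∈ t, 3 * C^2 * ((m:ℝ)^σ)^2 * X j ^ σ < X j ^ (k-1) := by
        intro j hj
        have hej : e j ≠ 0 := by simpa [htdef] using hj
        have hgt : P < p j ^ e j := lt_of_lt_of_le (hpgt j) (Nat.le_self_pow hej _)
        have h := hP (p j ^ e j) hgt
        have hnat : ((p j ^ e j : ℕ):ℝ) ^ ((k:ℝ) - 1) = X j ^ (k-1) := by
          rw [hXdef]
          have : ((k:ℝ) - 1) = ((k - 1 : ℕ) : ℝ) := by
            have : (1:ℕ) ≤ k := by omega
            push_cast [this]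
            ring
          rw [this, Real.rpow_natCast]
        rw [hnat] at h
        exact h
      -- chain
      have hchain : |((a (m * ∏ j, p j ^ e j) - a m * ∏ j, b (p j ^ e j) : ℤ) : ℝ)|
          < ((∏ i, (p i:ℤ)^((k-1)*e i) : ℤ) : ℝ) := by
        have h1 : |((a (m * ∏ j, p j ^ e j) - a m * ∏ j, b (p j ^ e j) : ℤ) : ℝ)|
            ≤ |((a (m * ∏ j, p j ^ e j) : ℤ):ℝ)| + |((a m : ℤ):ℝ)| * |((∏ j, b (p j ^ e j) : ℤ):ℝ)| := by
          rw [Int.cast_sub, Int.cast_mul]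
          calc |((a (m * ∏ j, p j ^ e j) : ℤ):ℝ) - ((a m : ℤ):ℝ) * ((∏ j, b (p j ^ e j) : ℤ):ℝ)|
              ≤ |((a (m * ∏ j, p j ^ e j) : ℤ):ℝ)| + |((a m : ℤ):ℝ) * ((∏ j, b (p j ^ e j) : ℤ):ℝ)| :=
                abs_sub _ _
            _ = |((a (m * ∏ j, p j ^ e j) : ℤ):ℝ)| + |((a m : ℤ):ℝ)| * |((∏ j, b (p j ^ e j) : ℤ):ℝ)| := by
                rw [abs_mul]
        have h2 : |((a m : ℤ):ℝ)| * |((∏ j, b (p j ^ e j) : ℤ):ℝ)| ≤ (C * (m:ℝ)^σ) * (C^c * Q) :=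
          mul_le_mul ham hBbd (abs_nonneg _) (by positivity)
        have h3 : |((a (m * ∏ j, p j ^ e j) - a m * ∏ j, b (p j ^ e j) : ℤ) : ℝ)|
            < (C * (m:ℝ)^σ + C^(c+1) * (m:ℝ)^σ) * Q := by
          have : (C * (m:ℝ)^σ) * (C^c * Q) = C^(c+1) * (m:ℝ)^σ * Q := by ring
          calc |((a (m * ∏ j, p j ^ e j) - a m * ∏ j, b (p j ^ e j) : ℤ) : ℝ)|
              ≤ |((a (m * ∏ j, p j ^ e j) : ℤ):ℝ)| + |((a m : ℤ):ℝ)| * |((∏ j, b (p j ^ e j) : ℤ):ℝ)| := h1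
            _ < C * (m:ℝ)^σ * Q + (C * (m:ℝ)^σ) * (C^c * Q) := by
                apply add_lt_add_of_lt_of_le haN h2
            _ = (C * (m:ℝ)^σ + C^(c+1) * (m:ℝ)^σ) * Q := by ring
        have h4 : (C * (m:ℝ)^σ + C^(c+1) * (m:ℝ)^σ) * Q ≤ (3 * C^2 * ((m:ℝ)^σ)^2)^c * Q := by
          apply mul_le_mul_of_nonneg_right _ hQpos.le
          have e1 : C ≤ C^(c+1) := by
            calc C = C^1 := (pow_one C).symm
              _ ≤ C^(c+1) := pow_le_pow_right₀ hC1 (by omega)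
          have e2 : C^(c+1) ≤ C^(2*c) := pow_le_pow_right₀ hC1 (by omega)
          have e3 : (m:ℝ)^σ ≤ ((m:ℝ)^σ)^(2*c) := by
            calc (m:ℝ)^σ = ((m:ℝ)^σ)^1 := (pow_one _).symm
              _ ≤ ((m:ℝ)^σ)^(2*c) := pow_le_pow_right₀ hA1 (by omega)
          have e4 : (2:ℝ) ≤ 3^c := by
            calc (2:ℝ) ≤ 3^1 := by norm_num
              _ ≤ 3^c := pow_le_pow_right₀ (by norm_num) hc1
          have e5 : C^(c+1) * (m:ℝ)^σ ≤ C^(2*c) * ((m:ℝ)^σ)^(2*c) :=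
            mul_le_mul e2 e3 hA0.le (by positivity)
          have e6 : (3 * C^2 * ((m:ℝ)^σ)^2)^c = 3^c * (C^(2*c) * ((m:ℝ)^σ)^(2*c)) := by
            rw [mul_pow, mul_pow, ← pow_mul, ← pow_mul]
            ring
          rw [e6]
          have e7 : C * (m:ℝ)^σ ≤ C^(c+1) * (m:ℝ)^σ :=
            mul_le_mul_of_nonneg_right e1 hA0.le
          have e8 : (0:ℝ) < C^(c+1) * (m:ℝ)^σ := by positivity
          nlinarith [e5, e4, e7, e8]
        have h5 : (3 * C^2 * ((m:ℝ)^σ)^2)^c * Q < ((∏ i, (p i:ℤ)^((k-1)*e i) : ℤ) : ℝ) := by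
          rw [hmodcast]
          have : (3 * C^2 * ((m:ℝ)^σ)^2)^c * Q = ∏ j ∈ t, (3 * C^2 * ((m:ℝ)^σ)^2 * X j ^ σ) := by
            rw [Finset.prod_mul_distrib, Finset.prod_const, hQdef, hcdef]
          rw [this]
          exact Finset.prod_lt_prod_of_nonempty
            (fun j _ => mul_pos (by positivity) (Real.rpow_pos_of_pos (hX0 j) σ))
            (fun j hj => hPt j hj) htne
        linarith
      have habs : |a (m * ∏ j, p j ^ e j) - a m * ∏ j, b (p j ^ e j)|
          < ∏ i, (p i:ℤ)^((k-1)*e i) := by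
        exact_mod_cast (by rwa [← Int.cast_abs] at hchain :
          ((|a (m * ∏ j, p j ^ e j) - a m * ∏ j, b (p j ^ e j)| : ℤ):ℝ)
            < ((∏ i, (p i:ℤ)^((k-1)*e i) : ℤ) : ℝ))
      have hD0 := Int.eq_zero_of_abs_lt_dvd hdall habs
      linarith [hD0]



theorem coefficient_product_relation
    (k : ℕ) (hk : 2 ≤ k)
    (a b χ : ℕ → ℤ)
    (hχ : ∀ n : ℕ, χ n = -1 ∨ χ n = 0 ∨ χ n = 1)
    (C : ℝ) (hC : 1 < C)
    (ha : ∀ n : ℕ, 1 ≤ n → |((a n : ℝ))| < C * (n : ℝ) ^ ((k : ℝ) / 2 - 1 / 5))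
    (hb : ∀ n : ℕ, 1 ≤ n → |((b n : ℝ))| < C * (n : ℝ) ^ ((k : ℝ) / 2 - 1 / 5))
    (N₁ : ℕ)
    (hASD : ∀ p : ℕ, p.Prime → N₁ < p → ∀ n : ℕ, 1 ≤ n →
      ((p : ℤ) ^ ((k - 1) * (1 + padicValNat p n))) ∣
        (a (n * p) - b p * a n +
          χ p * (p : ℤ) ^ (k - 1) * (if p ∣ n then a (n / p) else 0)))
    (m : ℕ) (hm : 1 ≤ m) (ham : a m ≠ 0)
    (P : ℕ) (hPN : N₁ < P)
    (hP : ∀ n : ℕ, P < n →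
      3 * C ^ 2 * ((m : ℝ) ^ ((k : ℝ) / 2 - 1 / 5)) ^ 2 * (n : ℝ) ^ ((k : ℝ) / 2 - 1 / 5)
        < (n : ℝ) ^ ((k : ℝ) - 1))
    (hb1 : b 1 = 1)
    (hbrec : ∀ p : ℕ, p.Prime → ∀ e : ℕ, 1 ≤ e →
      b (p ^ (e + 1)) = b p * b (p ^ e) - χ p * (p : ℤ) ^ (k - 1) * b (p ^ (e - 1)))
    (r : ℕ) (p e : Fin (r + 1) → ℕ)
    (hpinj : Function.Injective p)
    (hpprime : ∀ i, (p i).Prime)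
    (hpgt : ∀ i, P < p i)
    (hpcop : ∀ i, Nat.Coprime (p i) m) :
    a m * a (m * ∏ i, p i ^ e i) =
      a (m * ∏ i : Fin r, p i.castSucc ^ e i.castSucc) *
        a (m * p (Fin.last r) ^ e (Fin.last r)) := by
  have key := asd_key k hk a b χ C hC ha hb N₁ hASD m hm P hPN hP hb1 hbrec
    r p hpinj hpprime hpgt hpcop
  classical
  set eC : Fin (r+1) → ℕ := fun i => if i = Fin.last r then 0 else e i with heC
  set eL : Fin (r+1) → ℕ := fun i => if i = Fin.last r then e i else 0 with heL
  have h1 := key (∑ i, e i) e rfl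
  have h2 := key (∑ i, eC i) eC rfl
  have h3 := key (∑ i, eL i) eL rfl
  have hne : ∀ i : Fin r, i.castSucc ≠ Fin.last r := fun i => (Fin.castSucc_lt_last i).ne
  have hpC : (∏ i, p i ^ eC i) = ∏ i : Fin r, p i.castSucc ^ e i.castSucc := by
    rw [Fin.prod_univ_castSucc]
    simp [heC, hne]
  have hpL : (∏ i, p i ^ eL i) = p (Fin.last r) ^ e (Fin.last r) := by
    rw [Fin.prod_univ_castSucc]
    simp [heL, hne]
  have hbC : (∏ i, b (p i ^ eC i)) = ∏ i : Fin r, b (p i.castSucc ^ e i.castSucc) := by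
    rw [Fin.prod_univ_castSucc]
    simp [heC, hne, hb1]
  have hbL : (∏ i, b (p i ^ eL i)) = b (p (Fin.last r) ^ e (Fin.last r)) := by
    rw [Fin.prod_univ_castSucc]
    simp [heL, hne, hb1]
  have hbfull : (∏ i, b (p i ^ e i))
      = (∏ i : Fin r, b (p i.castSucc ^ e i.castSucc)) * b (p (Fin.last r) ^ e (Fin.last r)) :=
    Fin.prod_univ_castSucc _
  rw [h1, hbfull, ← hpC, h2, hbC, ← hpL, h3, hbL, hpL]
  ring
end

section
/- Assume additionally that b(1) = 1, that b is multiplicative (b(MN) = b(M)b(N) for coprime positive integers M, N), and that for every prime p and every e ≥ 1 one has b(p^{e+1}) = b(p)·b(p^e) − χ(p)·p^{k−1}·b(p^{e−1}). Let p₁, …, p_r be distinct primes, each greater than P(m) and coprime to m, and let e₁, …, e_r ≥ 0 be integers. Then a(m·p₁^{e₁}⋯p_r^{e_r}) = a(m)·b(p₁^{e₁})⋯b(p_r^{e_r}) = a(m)·b(p₁^{e₁}⋯p_r^{e_r}). -/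
private lemma asd_bprod (b : ℕ → ℤ) (hb1 : b 1 = 1)
    (hbmul : ∀ M M' : ℕ, 0 < M → 0 < M' → Nat.Coprime M M' → b (M * M') = b M * b M')
    {r : ℕ} (f : Fin r → ℕ) (hf : ∀ i, 0 < f i)
    (hcop : ∀ i j, i ≠ j → Nat.Coprime (f i) (f j)) (s : Finset (Fin r)) :
    b (∏ i ∈ s, f i) = ∏ i ∈ s, b (f i) := by
  classical
  induction s using Finset.induction_on with
  | empty => simpa using hb1
  | insert c s ha ih =>
    rw [Finset.prod_insert ha, Finset.prod_insert ha, ← ih]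
    exact hbmul _ _ (hf c) (Finset.prod_pos fun i _ => hf i)
      (Nat.Coprime.prod_right fun j hj => hcop c j (by rintro rfl; exact ha hj))

private lemma asd_main
    (k : ℕ) (hk : 2 ≤ k)
    (a b χ : ℕ → ℤ)
    (C : ℝ) (hC : 1 < C)
    (ha : ∀ n : ℕ, 1 ≤ n → |((a n : ℝ))| < C * (n : ℝ) ^ ((k : ℝ) / 2 - 1 / 5))
    (hb : ∀ n : ℕ, 1 ≤ n → |((b n : ℝ))| < C * (n : ℝ) ^ ((k : ℝ) / 2 - 1 / 5))
    (N₁ : ℕ)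
    (hASD : ∀ p : ℕ, p.Prime → N₁ < p → ∀ n : ℕ, 1 ≤ n →
      ((p : ℤ) ^ ((k - 1) * (1 + padicValNat p n))) ∣
        (a (n * p) - b p * a n +
          χ p * (p : ℤ) ^ (k - 1) * (if p ∣ n then a (n / p) else 0)))
    (m : ℕ) (hm : 1 ≤ m)
    (P : ℕ) (hPN : N₁ < P)
    (hP : ∀ n : ℕ, P < n →
      3 * C ^ 2 * ((m : ℝ) ^ ((k : ℝ) / 2 - 1 / 5)) ^ 2 * (n : ℝ) ^ ((k : ℝ) / 2 - 1 / 5)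
        < (n : ℝ) ^ ((k : ℝ) - 1))
    (hb1 : b 1 = 1)
    (hbrec : ∀ p : ℕ, p.Prime → ∀ e : ℕ, 1 ≤ e →
      b (p ^ (e + 1)) = b p * b (p ^ e) - χ p * (p : ℤ) ^ (k - 1) * b (p ^ (e - 1)))
    (hbmul : ∀ M M' : ℕ, 0 < M → 0 < M' → Nat.Coprime M M' → b (M * M') = b M * b M')
    (r : ℕ) (p : Fin r → ℕ)
    (hpinj : Function.Injective p)
    (hpprime : ∀ i, (p i).Prime)
    (hpgt : ∀ i, P < p i)
    (hpcop : ∀ i, Nat.Coprime (p i) m) :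
    ∀ s : ℕ, ∀ e : Fin r → ℕ, (∑ i, e i) = s →
      a (m * ∏ i, p i ^ e i) = a m * ∏ i, b (p i ^ e i) := by
  classical
  intro s
  induction s using Nat.strong_induction_on with
  | _ s IH =>
  intro e hse
  rcases Nat.eq_zero_or_pos s with rfl | hs
  · have he : ∀ i, e i = 0 := by
      intro i
      exact Finset.sum_eq_zero_iff.mp hse i (Finset.mem_univ i)
    simp [he, hb1]
  · obtain ⟨j, hj⟩ : ∃ j, e j ≠ 0 := by
      by_contra h
      push_neg at h
      simp only [h, Finset.sum_const_zero] at hse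
      omega
    have hNpos : 0 < ∏ i, p i ^ e i := Finset.prod_pos fun i _ => pow_pos (hpprime i).pos _
    -- key divisibility
    have key : ∀ i : Fin r, (p i : ℤ) ^ ((k - 1) * e i) ∣
        a (m * ∏ i, p i ^ e i) - a m * ∏ i, b (p i ^ e i) := by
      intro i
      rcases Nat.eq_zero_or_pos (e i) with hei | hei
      · simp [hei]
      · set M : ℕ := ∏ j ∈ Finset.univ.erase i, p j ^ e j with hM
        set R : ℤ := ∏ j ∈ Finset.univ.erase i, b (p j ^ e j) with hR
        have hMpos : 0 < M := Finset.prod_pos fun j _ => pow_pos (hpprime j).pos _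
        have hNsplit : (∏ j, p j ^ e j) = p i ^ e i * M :=
          (Finset.mul_prod_erase _ _ (Finset.mem_univ i)).symm
        have hbsplit : (∏ j, b (p j ^ e j)) = b (p i ^ e i) * R :=
          (Finset.mul_prod_erase _ _ (Finset.mem_univ i)).symm
        have hndvd : ¬ p i ∣ m * M := by
          rw [(hpprime i).dvd_mul]
          push_neg
          refine ⟨(Nat.Prime.coprime_iff_not_dvd (hpprime i)).mp (hpcop i), ?_⟩
          intro hd
          obtain ⟨j', hj'mem, hj'd⟩ := (hpprime i).prime.exists_mem_finset_dvd hd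
          have : p i = p j' := (Nat.prime_dvd_prime_iff_eq (hpprime i) (hpprime j')).mp
            ((hpprime i).dvd_of_dvd_pow hj'd)
          exact (Finset.mem_erase.mp hj'mem).1 (hpinj this.symm)
        set e' : Fin r → ℕ := Function.update e i (e i - 1) with he'def
        set e'' : Fin r → ℕ := Function.update e i (e i - 2) with he''def
        have hsplit_sum : e i + ∑ j ∈ Finset.univ.erase i, e j = s := by
          rw [Finset.add_sum_erase _ _ (Finset.mem_univ i)]; exact hse
        have he'sum : (∑ j, e' j) = s - 1 := by
          rw [he'def, ← Finset.add_sum_erase _ _ (Finset.mem_univ i)]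
          have h1 : Function.update e i (e i - 1) i = e i - 1 := Function.update_self ..
          have h2 : (∑ j ∈ Finset.univ.erase i, Function.update e i (e i - 1) j)
              = ∑ j ∈ Finset.univ.erase i, e j :=
            Finset.sum_congr rfl fun j' hj' =>
              Function.update_of_ne (Finset.mem_erase.mp hj').1 _ _
          rw [h1, h2]
          omega
        have hprod_e' : (∏ j, p j ^ e' j) = p i ^ (e i - 1) * M := by
          rw [hM, ← Finset.mul_prod_erase _ (fun j => p j ^ e' j) (Finset.mem_univ i)]
          have h1 : e' i = e i - 1 := Function.update_self ..
          rw [h1]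
          congr 1
          exact Finset.prod_congr rfl fun j' hj' => by
            rw [show e' j' = e j' from Function.update_of_ne (Finset.mem_erase.mp hj').1 _ _]
        have hprod_e'' : (∏ j, p j ^ e'' j) = p i ^ (e i - 2) * M := by
          rw [hM, ← Finset.mul_prod_erase _ (fun j => p j ^ e'' j) (Finset.mem_univ i)]
          have h1 : e'' i = e i - 2 := Function.update_self ..
          rw [h1]
          congr 1
          exact Finset.prod_congr rfl fun j' hj' => by
            rw [show e'' j' = e j' from Function.update_of_ne (Finset.mem_erase.mp hj').1 _ _]
        have hbprod_e' : (∏ j, b (p j ^ e' j)) = b (p i ^ (e i - 1)) * R := by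
          rw [hR, ← Finset.mul_prod_erase _ (fun j => b (p j ^ e' j)) (Finset.mem_univ i)]
          have h1 : e' i = e i - 1 := Function.update_self ..
          rw [h1]
          congr 1
          exact Finset.prod_congr rfl fun j' hj' => by
            rw [show e' j' = e j' from Function.update_of_ne (Finset.mem_erase.mp hj').1 _ _]
        have hbprod_e'' : (∏ j, b (p j ^ e'' j)) = b (p i ^ (e i - 2)) * R := by
          rw [hR, ← Finset.mul_prod_erase _ (fun j => b (p j ^ e'' j)) (Finset.mem_univ i)]
          have h1 : e'' i = e i - 2 := Function.update_self ..
          rw [h1]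
          congr 1
          exact Finset.prod_congr rfl fun j' hj' => by
            rw [show e'' j' = e j' from Function.update_of_ne (Finset.mem_erase.mp hj').1 _ _]
        have hn0 : m * (∏ j, p j ^ e' j) * p i = m * ∏ j, p j ^ e j := by
          rw [hprod_e', hNsplit]
          have hpe : p i ^ (e i - 1) * p i = p i ^ e i := by
            rw [← pow_succ]; congr 1; omega
          calc m * (p i ^ (e i - 1) * M) * p i
              = m * (p i ^ (e i - 1) * p i * M) := by ring
            _ = m * (p i ^ e i * M) := by rw [hpe]
        haveI : Fact (p i).Prime := ⟨hpprime i⟩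
        have hval : padicValNat (p i) (m * ∏ j, p j ^ e' j) = e i - 1 := by
          rw [hprod_e']
          have h1 : m * (p i ^ (e i - 1) * M) = p i ^ (e i - 1) * (m * M) := by ring
          rw [h1, padicValNat.mul (pow_ne_zero _ (hpprime i).pos.ne')
            (Nat.mul_pos (by omega) hMpos).ne', padicValNat.prime_pow,
            padicValNat.eq_zero_of_not_dvd hndvd, add_zero]
        have hn0pos : 1 ≤ m * ∏ j, p j ^ e' j :=
          Nat.mul_pos (by omega) (Finset.prod_pos fun j' _ => pow_pos (hpprime j').pos _)
        have hasd := hASD (p i) (hpprime i) (lt_trans hPN (hpgt i)) _ hn0pos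
        rw [hval, hn0] at hasd
        have hexp : (k - 1) * (1 + (e i - 1)) = (k - 1) * e i := by
          congr 1; omega
        rw [hexp] at hasd
        have hIH1 := IH (s - 1) (by omega) e' he'sum
        rcases Nat.lt_or_ge (e i) 2 with h2 | h2
        · -- e i = 1
          have he1 : e i = 1 := by omega
          have hif : ¬ p i ∣ m * ∏ j, p j ^ e' j := by
            rw [hprod_e']
            intro hd
            apply hndvd
            have : e i - 1 = 0 := by omega
            rwa [this, pow_zero, one_mul] at hd
          rw [if_neg hif] at hasd
          have heq : a (m * ∏ j, p j ^ e j) - a m * ∏ j, b (p j ^ e j) =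
              a (m * ∏ j, p j ^ e j) - b (p i) * a (m * ∏ j, p j ^ e' j) +
                χ (p i) * (p i : ℤ) ^ (k - 1) * 0 := by
            rw [hIH1, hbprod_e', hbsplit, he1]
            simp [hb1]
            ring
          rw [heq]
          exact hasd
        · -- 2 ≤ e i
          have hif : p i ∣ m * ∏ j, p j ^ e' j := by
            rw [hprod_e']
            exact Dvd.dvd.mul_left (Dvd.dvd.mul_right (dvd_pow_self _ (by omega)) M) m
          rw [if_pos hif] at hasd
          have hdivq : (m * ∏ j, p j ^ e' j) / p i = m * ∏ j, p j ^ e'' j := by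
            have hkey : m * ∏ j, p j ^ e' j = (m * ∏ j, p j ^ e'' j) * p i := by
              rw [hprod_e', hprod_e'']
              have hpe : p i ^ (e i - 2) * p i = p i ^ (e i - 1) := by
                rw [← pow_succ]; congr 1; omega
              calc m * (p i ^ (e i - 1) * M)
                  = m * (p i ^ (e i - 2) * p i * M) := by rw [hpe]
                _ = m * (p i ^ (e i - 2) * M) * p i := by ring
            rw [hkey, Nat.mul_div_cancel _ (hpprime i).pos]
          rw [hdivq] at hasd
          have he''sum : (∑ j, e'' j) = s - 2 := by
            rw [he''def, ← Finset.add_sum_erase _ _ (Finset.mem_univ i)]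
            have h1 : Function.update e i (e i - 2) i = e i - 2 := Function.update_self ..
            have hzz : (∑ j ∈ Finset.univ.erase i, Function.update e i (e i - 2) j)
                = ∑ j ∈ Finset.univ.erase i, e j :=
              Finset.sum_congr rfl fun j' hj' =>
                Function.update_of_ne (Finset.mem_erase.mp hj').1 _ _
            rw [h1, hzz]
            omega
          have hIH2 := IH (s - 2) (by omega) e'' he''sum
          have hbrec' := hbrec (p i) (hpprime i) (e i - 1) (by omega)
          rw [show e i - 1 + 1 = e i by omega, show e i - 1 - 1 = e i - 2 by omega] at hbrec'
          have heq : a (m * ∏ j, p j ^ e j) - a m * ∏ j, b (p j ^ e j) =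
              a (m * ∏ j, p j ^ e j) - b (p i) * a (m * ∏ j, p j ^ e' j) +
                χ (p i) * (p i : ℤ) ^ (k - 1) * a (m * ∏ j, p j ^ e'' j) := by
            rw [hIH1, hIH2, hbprod_e', hbprod_e'', hbsplit, hbrec']
            ring
          rw [heq]
          exact hasd
    -- combine to divisibility by N^(k-1)
    have hprodcast : (∏ i, (p i : ℤ) ^ ((k - 1) * e i)) = ((∏ i, p i ^ e i : ℕ) : ℤ) ^ (k - 1) := by
      push_cast
      rw [← Finset.prod_pow]
      exact Finset.prod_congr rfl fun i _ => by rw [← pow_mul, mul_comm]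
    have hdvdN : ((∏ i, p i ^ e i : ℕ) : ℤ) ^ (k - 1) ∣
        a (m * ∏ i, p i ^ e i) - a m * ∏ i, b (p i ^ e i) := by
      rw [← hprodcast]
      refine Fintype.prod_dvd_of_coprime ?_ key
      intro i j' hij
      have hc : Nat.Coprime (p i ^ ((k - 1) * e i)) (p j' ^ ((k - 1) * e j')) :=
        Nat.Coprime.pow _ _ ((Nat.coprime_primes (hpprime i) (hpprime j')).mpr
          (fun h => hij (hpinj h)))
      have := hc.isCoprime
      push_cast at this
      exact this
    -- multiplicativity of b on the product
    have hbN : (∏ i, b (p i ^ e i)) = b (∏ i, p i ^ e i) :=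
      (asd_bprod b hb1 hbmul (fun i => p i ^ e i) (fun i => pow_pos (hpprime i).pos _)
        (fun i j' hij => Nat.Coprime.pow _ _ ((Nat.coprime_primes (hpprime i) (hpprime j')).mpr
          (fun h => hij (hpinj h)))) _).symm
    -- bound argument
    by_contra hne
    have hD : a (m * ∏ i, p i ^ e i) - a m * ∏ i, b (p i ^ e i) ≠ 0 := sub_ne_zero.mpr hne
    have hle : ((∏ i, p i ^ e i : ℕ) : ℤ) ^ (k - 1) ≤
        |a (m * ∏ i, p i ^ e i) - a m * ∏ i, b (p i ^ e i)| :=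
      Int.le_of_dvd (abs_pos.mpr hD) ((dvd_abs _ _).mpr hdvdN)
    set N : ℕ := ∏ i, p i ^ e i with hNdef
    set x : ℝ := (k : ℝ) / 2 - 1 / 5 with hxdef
    have hxpos : 0 < x := by
      have : (2 : ℝ) ≤ (k : ℝ) := by exact_mod_cast hk
      rw [hxdef]; linarith
    have hNgtP : P < N := by
      refine lt_of_lt_of_le (hpgt j) (Nat.le_of_dvd hNpos ?_)
      exact dvd_trans (dvd_pow_self (p j) hj) (Finset.dvd_prod_of_mem _ (Finset.mem_univ j))
    have hmx1 : (1 : ℝ) ≤ (m : ℝ) ^ x :=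
      Real.one_le_rpow (by exact_mod_cast hm) hxpos.le
    have hNx0 : (0 : ℝ) ≤ (N : ℝ) ^ x := Real.rpow_nonneg (Nat.cast_nonneg N) x
    have h1 : |(a (m * N) : ℝ)| < C * ((m : ℝ) ^ x * (N : ℝ) ^ x) := by
      have := ha (m * N) (Nat.mul_pos (by omega) hNpos)
      rwa [Nat.cast_mul, Real.mul_rpow (Nat.cast_nonneg m) (Nat.cast_nonneg N)] at this
    have h2 : |(a m : ℝ)| < C * (m : ℝ) ^ x := ha m hm
    have h3 : |(b N : ℝ)| < C * (N : ℝ) ^ x := hb N hNpos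
    have h4 : |(a m : ℝ)| * |(b N : ℝ)| < (C * (m : ℝ) ^ x) * (C * (N : ℝ) ^ x) :=
      mul_lt_mul'' h2 h3 (abs_nonneg _) (abs_nonneg _)
    have hPb := hP N hNgtP
    have hpowR : ((N : ℝ)) ^ ((k : ℝ) - 1) = (N : ℝ) ^ (k - 1 : ℕ) := by
      rw [← Real.rpow_natCast (N : ℝ) (k - 1)]
      congr 1
      rw [Nat.cast_sub (by omega : 1 ≤ k), Nat.cast_one]
    rw [hpowR] at hPb
    have hleR : ((N : ℝ)) ^ (k - 1 : ℕ) ≤ |(a (m * N) : ℝ) - (a m : ℝ) * (b N : ℝ)| := by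
      rw [hbN] at hle
      have := (Int.cast_le (R := ℝ)).mpr hle
      push_cast at this
      convert this using 2
    have htri : |(a (m * N) : ℝ) - (a m : ℝ) * (b N : ℝ)| ≤
        |(a (m * N) : ℝ)| + |(a m : ℝ)| * |(b N : ℝ)| := by
      rw [← abs_mul]
      exact (abs_sub _ _)
    have hC1 : (1 : ℝ) ≤ C := hC.le
    have h5 : C * ((m : ℝ) ^ x * (N : ℝ) ^ x) + (C * (m : ℝ) ^ x) * (C * (N : ℝ) ^ x)
        ≤ 3 * C ^ 2 * ((m : ℝ) ^ x) ^ 2 * (N : ℝ) ^ x := by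
      have hin : (0:ℝ) ≤ 3 * C * (m:ℝ)^x - 1 - C := by
        have := mul_nonneg (by linarith : (0:ℝ) ≤ 3 * C) (sub_nonneg.mpr hmx1)
        nlinarith
      have hfac : (0:ℝ) ≤ C * (m:ℝ)^x * (N:ℝ)^x * (3 * C * (m:ℝ)^x - 1 - C) := by
        apply mul_nonneg _ hin
        have hmx0 : (0:ℝ) ≤ (m:ℝ)^x := by linarith
        have hC0 : (0:ℝ) ≤ C := by linarith
        exact mul_nonneg (mul_nonneg hC0 hmx0) hNx0
      nlinarith [hfac]
    linarith

theorem coefficients_agree_at_large_smooth_multiples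
    (k : ℕ) (hk : 2 ≤ k)
    (a b χ : ℕ → ℤ)
    (hχ : ∀ n : ℕ, χ n = -1 ∨ χ n = 0 ∨ χ n = 1)
    (C : ℝ) (hC : 1 < C)
    (ha : ∀ n : ℕ, 1 ≤ n → |((a n : ℝ))| < C * (n : ℝ) ^ ((k : ℝ) / 2 - 1 / 5))
    (hb : ∀ n : ℕ, 1 ≤ n → |((b n : ℝ))| < C * (n : ℝ) ^ ((k : ℝ) / 2 - 1 / 5))
    (N₁ : ℕ)
    (hASD : ∀ p : ℕ, p.Prime → N₁ < p → ∀ n : ℕ, 1 ≤ n →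
      ((p : ℤ) ^ ((k - 1) * (1 + padicValNat p n))) ∣
        (a (n * p) - b p * a n +
          χ p * (p : ℤ) ^ (k - 1) * (if p ∣ n then a (n / p) else 0)))
    (m : ℕ) (hm : 1 ≤ m) (ham : a m ≠ 0)
    (P : ℕ) (hPN : N₁ < P)
    (hP : ∀ n : ℕ, P < n →
      3 * C ^ 2 * ((m : ℝ) ^ ((k : ℝ) / 2 - 1 / 5)) ^ 2 * (n : ℝ) ^ ((k : ℝ) / 2 - 1 / 5)
        < (n : ℝ) ^ ((k : ℝ) - 1))
    (hb1 : b 1 = 1)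
    (hbrec : ∀ p : ℕ, p.Prime → ∀ e : ℕ, 1 ≤ e →
      b (p ^ (e + 1)) = b p * b (p ^ e) - χ p * (p : ℤ) ^ (k - 1) * b (p ^ (e - 1)))
    (hbmul : ∀ M M' : ℕ, 0 < M → 0 < M' → Nat.Coprime M M' → b (M * M') = b M * b M')
    (r : ℕ) (p e : Fin r → ℕ)
    (hpinj : Function.Injective p)
    (hpprime : ∀ i, (p i).Prime)
    (hpgt : ∀ i, P < p i)
    (hpcop : ∀ i, Nat.Coprime (p i) m) :
    a (m * ∏ i, p i ^ e i) = a m * ∏ i, b (p i ^ e i) ∧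
      a (m * ∏ i, p i ^ e i) = a m * b (∏ i, p i ^ e i) := by
  have h1 := asd_main k hk a b χ C hC ha hb N₁ hASD m hm P hPN hP hb1 hbrec hbmul
    r p hpinj hpprime hpgt hpcop (∑ i, e i) e rfl
  have h2 : (∏ i, b (p i ^ e i)) = b (∏ i, p i ^ e i) :=
    (asd_bprod b hb1 hbmul (fun i => p i ^ e i) (fun i => pow_pos (hpprime i).pos _)
      (fun i j hij => Nat.Coprime.pow _ _ ((Nat.coprime_primes (hpprime i) (hpprime j)).mpr
        (fun h => hij (hpinj h)))) _).symm
  exact ⟨h1, by rw [h1, h2]⟩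
end

section
/- Assume additionally that b(1) = 1, that b is multiplicative (b(MN) = b(M)b(N) for coprime positive integers M, N), and that for every prime p and every e ≥ 1 one has b(p^{e+1}) = b(p)·b(p^e) − χ(p)·p^{k−1}·b(p^{e−1}). Then for every positive integer M all of whose prime factors are greater than P(m) and which is coprime to m, a(m·M) = a(m)·b(M). -/
theorem coefficients_agree_at_large_multiples
    (k : ℕ) (hk : 2 ≤ k)
    (a b χ : ℕ → ℤ)
    (hχ : ∀ n : ℕ, χ n = -1 ∨ χ n = 0 ∨ χ n = 1)
    (C : ℝ) (hC : 1 < C)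
    (ha : ∀ n : ℕ, 1 ≤ n → |((a n : ℝ))| < C * (n : ℝ) ^ ((k : ℝ) / 2 - 1 / 5))
    (hb : ∀ n : ℕ, 1 ≤ n → |((b n : ℝ))| < C * (n : ℝ) ^ ((k : ℝ) / 2 - 1 / 5))
    (N₁ : ℕ)
    (hASD : ∀ p : ℕ, p.Prime → N₁ < p → ∀ n : ℕ, 1 ≤ n →
      ((p : ℤ) ^ ((k - 1) * (1 + padicValNat p n))) ∣
        (a (n * p) - b p * a n +
          χ p * (p : ℤ) ^ (k - 1) * (if p ∣ n then a (n / p) else 0)))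
    (m : ℕ) (hm : 1 ≤ m) (ham : a m ≠ 0)
    (P : ℕ) (hPN : N₁ < P)
    (hP : ∀ n : ℕ, P < n →
      3 * C ^ 2 * ((m : ℝ) ^ ((k : ℝ) / 2 - 1 / 5)) ^ 2 * (n : ℝ) ^ ((k : ℝ) / 2 - 1 / 5)
        < (n : ℝ) ^ ((k : ℝ) - 1))
    (hb1 : b 1 = 1)
    (hbrec : ∀ p : ℕ, p.Prime → ∀ e : ℕ, 1 ≤ e →
      b (p ^ (e + 1)) = b p * b (p ^ e) - χ p * (p : ℤ) ^ (k - 1) * b (p ^ (e - 1)))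
    (hbmul : ∀ M M' : ℕ, 0 < M → 0 < M' → Nat.Coprime M M' → b (M * M') = b M * b M')
    (M : ℕ) (hM : 0 < M)
    (hMfac : ∀ q : ℕ, q.Prime → q ∣ M → P < q)
    (hMcop : Nat.Coprime M m) :
    a (m * M) = a m * b M := by
  have hα : (0:ℝ) ≤ (k:ℝ)/2 - 1/5 := by
    have h2 : (2:ℝ) ≤ (k:ℝ) := by exact_mod_cast hk
    linarith
  revert hM hMfac hMcop
  induction M using Nat.strong_induction_on with
  | _ M IH =>
  intro hM hMfac hMcop
  by_cases hM1 : M = 1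
  · subst hM1; simp [hb1]
  have hM2 : 1 < M := lt_of_le_of_ne hM (Ne.symm hM1)
  set D : ℤ := a (m*M) - a m * b M with hDdef
  -- Step A: for each prime p dividing M, p^((k-1)*e_p) divides D
  have stepA : ∀ p ∈ M.primeFactors,
      ((p:ℤ))^((k-1) * M.factorization p) ∣ D := by
    intro p hp'
    have hp : p.Prime := Nat.prime_of_mem_primeFactors hp'
    have hpM : p ∣ M := Nat.dvd_of_mem_primeFactors hp'
    haveI := Fact.mk hp
    set e := M.factorization p with he
    have he1 : 1 ≤ e := hp.factorization_pos_of_dvd hM.ne' hpM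
    set M' := M / p^e with hM'def
    have hMeq : p^e * M' = M := Nat.ordProj_mul_ordCompl_eq_self M p
    have hpM' : ¬ p ∣ M' := Nat.not_dvd_ordCompl hp hM.ne'
    have hM'pos : 0 < M' := Nat.ordCompl_pos p hM.ne'
    have hpm : ¬ p ∣ m := by
      have hc : Nat.Coprime p m := Nat.Coprime.coprime_dvd_left hpM hMcop
      exact (hp.coprime_iff_not_dvd).mp hc
    have hpmM' : ¬ p ∣ m * M' := by
      rw [hp.dvd_mul]; tauto
    have hPp : N₁ < p := lt_trans hPN (hMfac p hp hpM)
    have hcpM' : Nat.Coprime M' p := ((hp.coprime_iff_not_dvd).mpr hpM').symm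
    -- IH for M' * p^j, j < e
    have hIH : ∀ j : ℕ, j < e → a (m * (M' * p^j)) = a m * (b M' * b (p^j)) := by
      intro j hj
      have hdvd : M' * p^j ∣ M := by
        rw [← hMeq, mul_comm (p^e) M']
        exact mul_dvd_mul_left M' (pow_dvd_pow p hj.le)
      have hpos : 0 < M' * p^j := Nat.mul_pos hM'pos (pow_pos hp.pos j)
      have hlt : M' * p^j < M := by
        calc M' * p^j < M' * p^e :=
              mul_lt_mul_of_pos_left (Nat.pow_lt_pow_right hp.one_lt hj) hM'pos
          _ = M := by rw [mul_comm]; exact hMeq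
      have h1 := IH (M' * p^j) hlt hpos
        (fun q hq hqd => hMfac q hq (hqd.trans hdvd))
        (Nat.Coprime.coprime_dvd_left hdvd hMcop)
      rw [h1, hbmul M' (p^j) hM'pos (pow_pos hp.pos j) (hcpM'.pow_right j)]
    have hbM : b M = b (p^e) * b M' := by
      rw [← hMeq]
      exact hbmul (p^e) M' (pow_pos hp.pos e) hM'pos (Nat.Coprime.pow_left e hcpM'.symm)
    rcases eq_or_lt_of_le he1 with he1' | he2
    · -- e = 1
      have hasd := hASD p hp hPp (m * M') (Nat.mul_pos hm hM'pos)
      have hval : padicValNat p (m * M') = 0 := padicValNat.eq_zero_of_not_dvd hpmM'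
      rw [hval] at hasd
      rw [if_neg hpmM'] at hasd
      have hnp : m * M' * p = m * M := by
        rw [← hMeq, ← he1', pow_one]; ring
      have haM' : a (m * M') = a m * b M' := by
        have h0 := hIH 0 (by omega)
        rw [pow_zero, mul_one, hb1, mul_one] at h0
        exact h0
      rw [hnp, haM'] at hasd
      have hkey : a (m*M) - b p * (a m * b M') + χ p * (p:ℤ)^(k-1) * 0 = D := by
        rw [hDdef, hbM, ← he1', pow_one]; ring
      rw [hkey] at hasd
      rw [show (k-1) * e = (k-1) * (1 + 0) by rw [← he1']]
      exact hasd
    · -- e ≥ 2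
      have he2' : 2 ≤ e := he2
      set n := m * (M' * p^(e-1)) with hn
      have hnpos : 0 < n := Nat.mul_pos hm (Nat.mul_pos hM'pos (pow_pos hp.pos _))
      have hasd := hASD p hp hPp n hnpos
      have hval : padicValNat p n = e - 1 := by
        have h1 : n = (m * M') * p^(e-1) := by rw [hn]; ring
        rw [h1, padicValNat.mul (Nat.mul_pos hm hM'pos).ne' (pow_pos hp.pos _).ne',
          padicValNat.eq_zero_of_not_dvd hpmM', padicValNat.prime_pow]
        omega
      have hpn : p ∣ n := by
        rw [hn]
        exact Dvd.dvd.mul_left (Dvd.dvd.mul_left (dvd_pow_self p (by omega)) M') m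
      rw [hval, if_pos hpn] at hasd
      have h1e : 1 + (e - 1) = e := by omega
      rw [h1e] at hasd
      have hnp : n * p = m * M := by
        rw [hn, ← hMeq]
        have : p^(e-1) * p = p^e := by
          rw [← pow_succ]; congr 1; omega
        calc m * (M' * p^(e-1)) * p = m * (M' * (p^(e-1) * p)) := by ring
          _ = m * (p^e * M') := by rw [this]; ring
      have hndiv : n / p = m * (M' * p^(e-2)) := by
        have : n = m * (M' * p^(e-2)) * p := by
          rw [hn]
          have : p^(e-2) * p = p^(e-1) := by
            rw [← pow_succ]; congr 1; omega
          calc m * (M' * p^(e-1)) = m * (M' * (p^(e-2) * p)) := by rw [this]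
            _ = m * (M' * p^(e-2)) * p := by ring
        rw [this, Nat.mul_div_cancel _ hp.pos]
      have hA1 := hIH (e-1) (by omega)
      have hA2 := hIH (e-2) (by omega)
      rw [hnp, hndiv, hn, hA1, hA2] at hasd
      have hbe := hbrec p hp (e-1) (by omega)
      rw [(by omega : e - 1 + 1 = e), (by omega : e - 1 - 1 = e - 2)] at hbe
      have hkey : a (m*M) - b p * (a m * (b M' * b (p^(e-1)))) +
          χ p * (p:ℤ)^(k-1) * (a m * (b M' * b (p^(e-2)))) = D := by
        rw [hDdef, hbM, hbe]; ring
      rw [hkey] at hasd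
      exact hasd
  -- Step B: M^(k-1) divides D
  have stepB : ((M:ℤ))^(k-1) ∣ D := by
    have hprod : ∏ p ∈ M.primeFactors, ((p:ℤ))^((k-1) * M.factorization p)
        = ((M:ℤ))^(k-1) := by
      have h1 : ∏ p ∈ M.primeFactors, p ^ M.factorization p = M := by
        rw [← Nat.support_factorization]
        exact Nat.factorization_prod_pow_eq_self hM.ne'
      calc ∏ p ∈ M.primeFactors, ((p:ℤ))^((k-1) * M.factorization p)
          = ∏ p ∈ M.primeFactors, (((p:ℤ))^(M.factorization p))^(k-1) := by
            apply Finset.prod_congr rfl; intro p _; rw [← pow_mul, mul_comm]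
        _ = (∏ p ∈ M.primeFactors, ((p:ℤ))^(M.factorization p))^(k-1) := by
            rw [Finset.prod_pow]
        _ = ((M:ℤ))^(k-1) := by
            congr 1
            exact_mod_cast congrArg (Nat.cast : ℕ → ℤ) h1
    rw [← hprod]
    apply Finset.prod_dvd_of_coprime _ stepA
    intro p hpmem q hqmem hne
    have hp := Nat.prime_of_mem_primeFactors hpmem
    have hq := Nat.prime_of_mem_primeFactors hqmem
    exact (Int.isCoprime_iff_gcd_eq_one.mpr (by
      simpa using (Nat.coprime_primes hp hq).mpr hne)).pow
  -- Step C: D = 0 by size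
  have hDzero : D = 0 := by
    by_contra hDne
    set α : ℝ := (k:ℝ)/2 - 1/5 with hαdef
    have hPM : P < M := by
      obtain ⟨q, hq, hqd⟩ := Nat.exists_prime_and_dvd hM1
      exact lt_of_lt_of_le (hMfac q hq hqd) (Nat.le_of_dvd hM hqd)
    -- lower bound
    have hlow : ((M:ℝ))^((k:ℝ)-1) ≤ |((D:ℝ))| := by
      have h1 : ((M:ℤ))^(k-1) ≤ |D| :=
        Int.le_of_dvd (abs_pos.mpr hDne) ((dvd_abs _ _).mpr stepB)
      have h2 : ((M:ℝ))^((k-1:ℕ)) ≤ |((D:ℝ))| := by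
        exact_mod_cast h1
      have h3 : ((M:ℝ))^((k:ℝ)-1) = ((M:ℝ))^((k-1:ℕ)) := by
        rw [← Real.rpow_natCast (M:ℝ) (k-1)]
        congr 1
        push_cast [Nat.cast_sub (by omega : 1 ≤ k)]
        ring
      rw [h3]; exact h2
    -- upper bound
    have hmα : (1:ℝ) ≤ (m:ℝ)^α :=
      Real.one_le_rpow (by exact_mod_cast hm) hα
    have hMα : (0:ℝ) ≤ (M:ℝ)^α := Real.rpow_nonneg (Nat.cast_nonneg M) α
    have haMm := ha (m*M) (Nat.one_le_iff_ne_zero.mpr (by positivity))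
    have ham' := ha m hm
    have hbM' := hb M hM
    have hsplit : ((m*M : ℕ):ℝ)^α = (m:ℝ)^α * (M:ℝ)^α := by
      push_cast
      exact Real.mul_rpow (Nat.cast_nonneg m) (Nat.cast_nonneg M)
    rw [hsplit] at haMm
    have habs : |((D:ℝ))| ≤ |((a (m*M) : ℤ):ℝ)| + |((a m : ℤ):ℝ)| * |((b M : ℤ):ℝ)| := by
      rw [hDdef]
      push_cast
      calc |((a (m*M):ℤ):ℝ) - ((a m : ℤ):ℝ) * ((b M : ℤ):ℝ)|
          ≤ |((a (m*M):ℤ):ℝ)| + |((a m : ℤ):ℝ) * ((b M : ℤ):ℝ)| := abs_sub _ _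
        _ = |((a (m*M):ℤ):ℝ)| + |((a m : ℤ):ℝ)| * |((b M : ℤ):ℝ)| := by rw [abs_mul]
    have hub : |((D:ℝ))| < 3 * C^2 * ((m:ℝ)^α)^2 * (M:ℝ)^α := by
      have h2 : |((a m : ℤ):ℝ)| * |((b M : ℤ):ℝ)| < (C * (m:ℝ)^α) * (C * (M:ℝ)^α) :=
        mul_lt_mul'' ham' hbM' (abs_nonneg _) (abs_nonneg _)
      have h3 : |((D:ℝ))| < C * ((m:ℝ)^α * (M:ℝ)^α) + (C * (m:ℝ)^α) * (C * (M:ℝ)^α) := by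
        calc |((D:ℝ))| ≤ _ := habs
          _ < _ := by exact add_lt_add haMm h2
      have hCpos : (0:ℝ) < C := lt_trans zero_lt_one hC
      have hMα1 : (1:ℝ) ≤ (M:ℝ)^α := Real.one_le_rpow (by exact_mod_cast hM) hα
      have hmα0 : (0:ℝ) ≤ (m:ℝ)^α := le_trans zero_le_one hmα
      have hCle : C ≤ C^2 := by nlinarith
      have hmle : (m:ℝ)^α ≤ ((m:ℝ)^α)^2 := by nlinarith [mul_le_mul_of_nonneg_left hmα hmα0]
      have t0 : C * (m:ℝ)^α ≤ C^2 * ((m:ℝ)^α)^2 :=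
        mul_le_mul hCle hmle hmα0 (by positivity)
      have t1 := mul_le_mul_of_nonneg_right t0 hMα
      have t0' : C * (m:ℝ)^α * C ≤ C^2 * ((m:ℝ)^α)^2 := by
        nlinarith [mul_le_mul_of_nonneg_left hmle (sq_nonneg C)]
      have t2 := mul_le_mul_of_nonneg_right t0' hMα
      have t3 : (0:ℝ) < C^2 * ((m:ℝ)^α)^2 * (M:ℝ)^α := by positivity
      nlinarith [t1, t2, t3, h3]
    have := hP M hPM
    linarith
  rw [hDdef] at hDzero
  linarith [hDzero]
end

section
/- Let Γ ≤ Δ be subgroups of SL₂(ℤ) with Γ of finite index in SL₂(ℤ). Let Γᶜ and Δᶜ denote the congruence closures of Γ and Δ respectively. Then the set product Δ·Γᶜ = {g₁g₂ : g₁ ∈ Δ, g₂ ∈ Γᶜ} equals Δᶜ, and consequently [Δᶜ : Δ] = [Γᶜ : Γᶜ ∩ Δ]. -/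
open scoped MatrixGroups ModularForm Real Manifold Topology Pointwise
open Complex CongruenceSubgroup UpperHalfPlane

noncomputable section

/-- `Γc` is the congruence closure of `Γ`: the smallest congruence subgroup of `SL(2, ℤ)`
containing `Γ`. -/
def IsCongruenceClosure (Γ Γc : Subgroup SL(2, ℤ)) : Prop :=
  Γ ≤ Γc ∧ IsCongruenceSubgroup Γc ∧
    ∀ H : Subgroup SL(2, ℤ), Γ ≤ H → IsCongruenceSubgroup H → Γc ≤ H

/-- `T` is a set of right coset representatives of `B` in the set `D`: `T ⊆ D` and every
`g ∈ D` lies in the right coset `B·t` of exactly one `t ∈ T`. -/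
def IsRightTransversal {A : Type*} [Group A] (B : Subgroup A) (D T : Set A) : Prop :=
  T ⊆ D ∧ ∀ g ∈ D, ∃! t, t ∈ T ∧ g * t⁻¹ ∈ B

/-- `f` is a cusp form of weight `k` for `Γ`: holomorphic on `ℍ`, weight-`k` slash invariant
under `Γ`, and vanishing at all the cusps. -/
def IsCuspFormWt (k : ℤ) (Γ : Subgroup SL(2, ℤ)) (f : ℍ → ℂ) : Prop :=
  MDifferentiable 𝓘(ℂ) 𝓘(ℂ) f ∧ (∀ γ ∈ Γ, f ∣[k] γ = f) ∧
    ∀ A : SL(2, ℤ), IsZeroAtImInfty (f ∣[k] A)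

/-- `f ∈ S_k^{prim}(Γ)`: the trace of `f` from `Γ` to the congruence closure `Γᶜ` of `Γ`,
namely `∑_{γ ∈ T} f ∣[k] γ` over a set `T` of right coset representatives of `Γ` in `Γᶜ`,
vanishes. -/
def IsPrimNoncong (k : ℤ) (Γ : Subgroup SL(2, ℤ)) (f : ℍ → ℂ) : Prop :=
  ∀ Γc : Subgroup SL(2, ℤ), IsCongruenceClosure Γ Γc →
    ∀ T : Finset SL(2, ℤ), IsRightTransversal Γ (Γc : Set SL(2, ℤ)) (T : Set SL(2, ℤ)) →
      ∑ γ ∈ T, f ∣[k] γ = 0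


lemma relindex_aux {G : Type*} [Group G] (D K C : Subgroup G) (hK : K ≤ C)
    (hprod : (D : Set G) * (K : Set G) = (C : Set G)) :
    D.relIndex C = D.relIndex K := by
  have hKD : (K : Set G) * (D : Set G) = (C : Set G) := by
    have := congrArg (·⁻¹) hprod
    simpa [mul_inv_rev, inv_coe_set] using this
  unfold Subgroup.relIndex Subgroup.index
  refine (Nat.card_congr ?_).symm
  refine Equiv.ofBijective (Quotient.map' (fun k => (⟨k, hK k.2⟩ : C)) ?_) ⟨?_, ?_⟩
  · intro a b hab
    rw [QuotientGroup.leftRel_apply] at hab ⊢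
    simpa [Subgroup.mem_subgroupOf] using hab
  · intro a b
    induction a using Quotient.inductionOn'
    induction b using Quotient.inductionOn'
    intro h
    rw [Quotient.map'_mk'', Quotient.map'_mk'', Quotient.eq''] at h
    rw [Quotient.eq'']
    rw [QuotientGroup.leftRel_apply] at h ⊢
    simpa [Subgroup.mem_subgroupOf] using h
  · intro c
    induction c using Quotient.inductionOn' with
    | h c =>
      have hc : (c : G) ∈ (K : Set G) * (D : Set G) := hKD ▸ c.2
      obtain ⟨k, hk, d, hd, hkd⟩ := hc
      refine ⟨Quotient.mk'' ⟨k, hk⟩, ?_⟩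
      rw [Quotient.map'_mk'', Quotient.eq'', QuotientGroup.leftRel_apply]
      simp only [Subgroup.mem_subgroupOf]
      have : k⁻¹ * (c : G) = d := by rw [← hkd]; group
      simpa [this] using hd


theorem congruence_closure_product_formula
    (Γ Δ : Subgroup SL(2, ℤ)) (hΓΔ : Γ ≤ Δ) (hΓ : Γ.index ≠ 0)
    (Γc Δc : Subgroup SL(2, ℤ))
    (hΓc : IsCongruenceClosure Γ Γc) (hΔc : IsCongruenceClosure Δ Δc) :
    (Δ : Set SL(2, ℤ)) * (Γc : Set SL(2, ℤ)) = (Δc : Set SL(2, ℤ)) ∧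
      Δ.relIndex Δc = Δ.relIndex Γc := by
  obtain ⟨hΓle, hΓcong, hΓmin⟩ := hΓc
  obtain ⟨hΔle, hΔcong, hΔmin⟩ := hΔc
  have hΓcΔc : Γc ≤ Δc := hΓmin Δc (hΓΔ.trans hΔle) hΔcong
  obtain ⟨N, hN⟩ := hΓcong
  have hGN : CongruenceSubgroup.Gamma N ≤ Γc := hN.2
  haveI : (CongruenceSubgroup.Gamma (N : ℕ)).Normal := Gamma_normal N
  have hsub : IsCongruenceSubgroup (Δ ⊔ CongruenceSubgroup.Gamma N) := ⟨N, hN.1, le_sup_right⟩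
  have hle2 : Δc ≤ Δ ⊔ Gamma N := hΔmin _ le_sup_left hsub
  have hprod : (Δ : Set SL(2, ℤ)) * (Γc : Set SL(2, ℤ)) = (Δc : Set SL(2, ℤ)) := by
    apply le_antisymm
    · rintro x ⟨d, hd, k, hk, rfl⟩
      exact Δc.mul_mem (hΔle hd) (hΓcΔc hk)
    · intro x hx
      have hx2 : x ∈ (↑(Δ ⊔ Gamma N) : Set SL(2, ℤ)) := hle2 hx
      rw [Subgroup.mul_normal] at hx2
      obtain ⟨d, hd, n, hn, rfl⟩ := hx2
      exact ⟨d, hd, n, hGN hn, rfl⟩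
  exact ⟨hprod, relindex_aux Δ Γc Δc hΓcΔc hprod⟩
end
end

section
/- Let h be a cusp form of weight k for a finite-index subgroup Γ of SL₂(ℤ) that is primitive noncongruence for Γ, and let G be any finite-index subgroup of Γ. Then h is a cusp form of weight k for G and is primitive noncongruence for G. -/
open scoped MatrixGroups ModularForm Real Manifold Topology Pointwise
open Complex CongruenceSubgroup UpperHalfPlane

noncomputable section

theorem primitive_noncongruence_descends_to_finite_index_subgroups
    (k : ℤ) (Γ : Subgroup SL(2, ℤ)) (hΓ : Γ.index ≠ 0)
    (h : ℍ → ℂ) (hcusp : IsCuspFormWt k Γ h) (hprim : IsPrimNoncong k Γ h)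
    (G : Subgroup SL(2, ℤ)) (hGΓ : G ≤ Γ) (hGfin : G.relIndex Γ ≠ 0) :
    IsCuspFormWt k G h ∧ IsPrimNoncong k G h := by
  classical
  obtain ⟨hdiff, hinv, hvan⟩ := hcusp
  refine ⟨⟨hdiff, fun γ hγ => hinv γ (hGΓ hγ), hvan⟩, ?_⟩
  intro Gc hGc T hT
  obtain ⟨hGGc, ⟨N, hN⟩, hGcmin⟩ := hGc
  obtain ⟨hTGc, hTuniq⟩ := hT
  -- the map `ρ` sending `g` to a canonical representative of the right coset `Γ g`
  set ρ : SL(2, ℤ) → SL(2, ℤ) :=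
    fun g => ((QuotientGroup.mk g⁻¹ : SL(2, ℤ) ⧸ Γ).out)⁻¹ with hρdef
  have hρ1 : ∀ g, ρ g * g⁻¹ ∈ Γ := by
    intro g
    have h0 : (QuotientGroup.mk ((QuotientGroup.mk g⁻¹ : SL(2, ℤ) ⧸ Γ).out) :
        SL(2, ℤ) ⧸ Γ) = QuotientGroup.mk g⁻¹ := Quotient.out_eq _
    rw [QuotientGroup.eq] at h0
    simpa [hρdef] using h0
  have hρ2 : ∀ g g', g * g'⁻¹ ∈ Γ → ρ g = ρ g' := by
    intro g g' hgg'
    have : (QuotientGroup.mk g⁻¹ : SL(2, ℤ) ⧸ Γ) = QuotientGroup.mk g'⁻¹ := by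
      rw [QuotientGroup.eq, inv_inv]
      exact hgg'
    simp [hρdef, this]
  have hρ3 : ∀ g g', ρ g = ρ g' → g * g'⁻¹ ∈ Γ := by
    intro g g' heq
    have h1 := hρ1 g
    have h2 := hρ1 g'
    have hkey : g * g'⁻¹ = (ρ g * g⁻¹)⁻¹ * (ρ g' * g'⁻¹) := by rw [heq]; group
    rw [hkey]
    exact mul_mem (inv_mem h1) h2
  -- the congruence closure of `Γ`
  set Γc : Subgroup SL(2, ℤ) := Γ ⊔ Gc with hΓcdef
  have hGcΓc : Gc ≤ Γc := le_sup_right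
  have hΓΓc : Γ ≤ Γc := le_sup_left
  have hclos : IsCongruenceClosure Γ Γc :=
    ⟨le_sup_left, ⟨N, hN.1, hN.2.trans hGcΓc⟩,
      fun H hΓH hHcong => sup_le hΓH (hGcmin H (hGΓ.trans hΓH) hHcong)⟩
  -- every element of `Γc` decomposes as `a * b` with `a ∈ Γ`, `b ∈ Gc`
  have hdecomp : ∀ γ ∈ Γc, ∃ a ∈ Γ, ∃ b ∈ Gc, γ = a * b := by
    intro γ hγ
    haveI : (CongruenceSubgroup.Gamma (N : ℕ)).Normal := Gamma_normal N
    have h1 : Γc ≤ Γ ⊔ CongruenceSubgroup.Gamma N := by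
      refine sup_le le_sup_left ?_
      exact (hGcmin (G ⊔ CongruenceSubgroup.Gamma N) le_sup_left ⟨N, hN.1, le_sup_right⟩).trans
        (sup_le (hGΓ.trans le_sup_left) le_sup_right)
    have h2 : γ ∈ (Γ : Set SL(2, ℤ)) * (CongruenceSubgroup.Gamma N : Set SL(2, ℤ)) := by
      rw [← Subgroup.mul_normal]
      exact h1 hγ
    obtain ⟨a, ha, b, hb, hab⟩ := h2
    exact ⟨a, ha, b, hN.2 hb, hab.symm⟩
  -- the image of `T` under `ρ` is a right transversal of `Γ` in `Γc`
  set S : Finset SL(2, ℤ) := T.image ρ with hSdef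
  have hTmemGc : ∀ t ∈ T, t ∈ Gc := fun t ht => hTGc (Finset.mem_coe.mpr ht)
  have hρTΓc : ∀ t ∈ T, ρ t ∈ Γc := by
    intro t ht
    have : ρ t = (ρ t * t⁻¹) * t := by group
    rw [this]
    exact mul_mem (hΓΓc (hρ1 t)) (hGcΓc (hTmemGc t ht))
  have hStrans : IsRightTransversal Γ (Γc : Set SL(2, ℤ)) (S : Set SL(2, ℤ)) := by
    constructor
    · intro s hs
      simp only [hSdef, Finset.coe_image, Set.mem_image, Finset.mem_coe] at hs
      obtain ⟨t, ht, rfl⟩ := hs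
      exact hρTΓc t ht
    · intro g hg
      obtain ⟨a, ha, b, hb, rfl⟩ := hdecomp g hg
      obtain ⟨t, ⟨htT, htG⟩, -⟩ := hTuniq b hb
      have htT' : t ∈ T := Finset.mem_coe.mp htT
      refine ⟨ρ t, ⟨?_, ?_⟩, ?_⟩
      · exact Finset.mem_coe.mpr (Finset.mem_image_of_mem ρ htT')
      · have hkey : a * b * (ρ t)⁻¹ = a * (b * t⁻¹) * (ρ t * t⁻¹)⁻¹ := by group
        rw [hkey]
        exact mul_mem (mul_mem ha (hGΓ htG)) (inv_mem (hρ1 t))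
      · rintro s ⟨hsS, hsΓ⟩
        simp only [hSdef, Finset.mem_coe, Finset.mem_image] at hsS
        obtain ⟨t', ht', rfl⟩ := hsS
        have hst : ρ t' * (ρ t)⁻¹ ∈ Γ := by
          have h1 : a * b * (ρ t)⁻¹ ∈ Γ := by
            have hkey : a * b * (ρ t)⁻¹ = a * (b * t⁻¹) * (ρ t * t⁻¹)⁻¹ := by group
            rw [hkey]
            exact mul_mem (mul_mem ha (hGΓ htG)) (inv_mem (hρ1 t))
          have hkey : ρ t' * (ρ t)⁻¹ = (a * b * (ρ t')⁻¹)⁻¹ * (a * b * (ρ t)⁻¹) := by group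
          rw [hkey]
          exact mul_mem (inv_mem hsΓ) h1
        calc ρ t' = ρ (ρ t') := (hρ2 (ρ t') t' (hρ1 t')).symm
          _ = ρ (ρ t) := hρ2 _ _ hst
          _ = ρ t := hρ2 (ρ t) t (hρ1 t)
  have hSsum : ∑ s ∈ S, h ∣[k] s = 0 := hprim Γc hclos S hStrans
  -- the choice function for the `G`-transversal `T` of `Gc`
  set τ : SL(2, ℤ) → SL(2, ℤ) :=
    fun u => if hu : u ∈ (Gc : Set SL(2, ℤ)) then (hTuniq u hu).choose else 1 with hτdef
  have hτspec : ∀ u, u ∈ Gc → τ u ∈ T ∧ u * (τ u)⁻¹ ∈ G := by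
    intro u hu
    have := (hTuniq u hu).choose_spec.1
    simp only [hτdef, dif_pos (show u ∈ (Gc : Set SL(2, ℤ)) from hu)]
    exact ⟨Finset.mem_coe.mp this.1, this.2⟩
  have hτuniq : ∀ u, u ∈ Gc → ∀ t ∈ T, u * t⁻¹ ∈ G → t = τ u := by
    intro u hu t ht htG
    have heq : τ u = (hTuniq u (show u ∈ (Gc : Set SL(2, ℤ)) from hu)).choose :=
      dif_pos (show u ∈ (Gc : Set SL(2, ℤ)) from hu)
    rw [heq]
    exact (hTuniq u hu).choose_spec.2 t ⟨Finset.mem_coe.mpr ht, htG⟩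
  -- all fibers of `ρ` on `T` have the same cardinality
  have hfiber : ∀ t₀ ∈ T, ∀ t₁ ∈ T,
      (T.filter fun t => ρ t = ρ t₀).card = (T.filter fun t => ρ t = ρ t₁).card := by
    intro t₀ ht₀ t₁ ht₁
    refine Finset.card_nbij' (fun t => τ (t * t₀⁻¹ * t₁)) (fun t => τ (t * t₁⁻¹ * t₀))
      ?_ ?_ ?_ ?_
    · intro t ht
      obtain ⟨htT, hteq⟩ := Finset.mem_filter.mp ht
      have htΓ : t * t₀⁻¹ ∈ Γ := hρ3 t t₀ hteq
      have huGc : t * t₀⁻¹ * t₁ ∈ Gc :=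
        mul_mem (mul_mem (hTmemGc t htT) (inv_mem (hTmemGc t₀ ht₀))) (hTmemGc t₁ ht₁)
      obtain ⟨hmem, hG⟩ := hτspec _ huGc
      refine Finset.mem_filter.mpr ⟨hmem, hρ2 _ _ ?_⟩
      have hkey : τ (t * t₀⁻¹ * t₁) * t₁⁻¹ =
          (t * t₀⁻¹ * t₁ * (τ (t * t₀⁻¹ * t₁))⁻¹)⁻¹ * (t * t₀⁻¹) := by group
      rw [hkey]
      exact mul_mem (inv_mem (hGΓ hG)) htΓ
    · intro t ht
      obtain ⟨htT, hteq⟩ := Finset.mem_filter.mp ht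
      have htΓ : t * t₁⁻¹ ∈ Γ := hρ3 t t₁ hteq
      have huGc : t * t₁⁻¹ * t₀ ∈ Gc :=
        mul_mem (mul_mem (hTmemGc t htT) (inv_mem (hTmemGc t₁ ht₁))) (hTmemGc t₀ ht₀)
      obtain ⟨hmem, hG⟩ := hτspec _ huGc
      refine Finset.mem_filter.mpr ⟨hmem, hρ2 _ _ ?_⟩
      have hkey : τ (t * t₁⁻¹ * t₀) * t₀⁻¹ =
          (t * t₁⁻¹ * t₀ * (τ (t * t₁⁻¹ * t₀))⁻¹)⁻¹ * (t * t₁⁻¹) := by group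
      rw [hkey]
      exact mul_mem (inv_mem (hGΓ hG)) htΓ
    · intro t ht
      obtain ⟨htT, hteq⟩ := Finset.mem_filter.mp ht
      have huGc : t * t₀⁻¹ * t₁ ∈ Gc :=
        mul_mem (mul_mem (hTmemGc t htT) (inv_mem (hTmemGc t₀ ht₀))) (hTmemGc t₁ ht₁)
      obtain ⟨hmem, hG⟩ := hτspec _ huGc
      have hvGc : τ (t * t₀⁻¹ * t₁) * t₁⁻¹ * t₀ ∈ Gc :=
        mul_mem (mul_mem (hTmemGc _ hmem) (inv_mem (hTmemGc t₁ ht₁))) (hTmemGc t₀ ht₀)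
      refine (hτuniq _ hvGc t htT ?_).symm
      have hkey : τ (t * t₀⁻¹ * t₁) * t₁⁻¹ * t₀ * t⁻¹ =
          (t * t₀⁻¹ * t₁ * (τ (t * t₀⁻¹ * t₁))⁻¹)⁻¹ := by group
      rw [hkey]
      exact inv_mem hG
    · intro t ht
      obtain ⟨htT, hteq⟩ := Finset.mem_filter.mp ht
      have huGc : t * t₁⁻¹ * t₀ ∈ Gc :=
        mul_mem (mul_mem (hTmemGc t htT) (inv_mem (hTmemGc t₁ ht₁))) (hTmemGc t₀ ht₀)
      obtain ⟨hmem, hG⟩ := hτspec _ huGc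
      have hvGc : τ (t * t₁⁻¹ * t₀) * t₀⁻¹ * t₁ ∈ Gc :=
        mul_mem (mul_mem (hTmemGc _ hmem) (inv_mem (hTmemGc t₀ ht₀))) (hTmemGc t₁ ht₁)
      refine (hτuniq _ hvGc t htT ?_).symm
      have hkey : τ (t * t₁⁻¹ * t₀) * t₀⁻¹ * t₁ * t⁻¹ =
          (t * t₁⁻¹ * t₀ * (τ (t * t₁⁻¹ * t₀))⁻¹)⁻¹ := by group
      rw [hkey]
      exact inv_mem hG
  -- now compute the trace
  rcases T.eq_empty_or_nonempty with rfl | ⟨t₀, ht₀⟩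
  · simp
  have hslash : ∀ t ∈ T, h ∣[k] t = h ∣[k] (ρ t) := by
    intro t ht
    have hkey : t = (ρ t * t⁻¹)⁻¹ * ρ t := by group
    calc h ∣[k] t = h ∣[k] ((ρ t * t⁻¹)⁻¹ * ρ t) := congrArg (fun g => h ∣[k] g) hkey
      _ = h ∣[k] ρ t := by rw [SlashAction.slash_mul, hinv _ (inv_mem (hρ1 t))]
  set m : ℕ := (T.filter fun t => ρ t = ρ t₀).card with hmdef
  have hstep : ∑ γ ∈ T, h ∣[k] γ = ∑ s ∈ S, m • (h ∣[k] s) := by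
    rw [Finset.sum_congr rfl hslash,
      ← Finset.sum_fiberwise_of_maps_to' (fun t ht => Finset.mem_image_of_mem ρ ht)
        (fun s => h ∣[k] s)]
    refine Finset.sum_congr rfl fun s hs => ?_
    obtain ⟨t₁, ht₁, rfl⟩ := Finset.mem_image.mp hs
    rw [Finset.sum_const, hmdef, hfiber t₀ ht₀ t₁ ht₁]
  rw [hstep, ← Finset.smul_sum, hSsum, smul_zero]
end
end

section
/- Let G be a finite-index subgroup of SL₂(ℤ) with congruence closure Gᶜ, and let γ ∈ GL₂(ℚ) with positive determinant satisfy γGγ⁻¹ = G. Assume (as holds for any γ ∈ GL₂(ℚ)) that γ⁻¹Gᶜγ ∩ SL₂(ℤ) contains a congruence subgroup and that γGᶜγ⁻¹ ∩ SL₂(ℤ) contains a congruence subgroup. Then γGᶜγ⁻¹ = Gᶜ, i.e., the congruence closure Gᶜ is also invariant under conjugation by γ. -/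
open scoped MatrixGroups ModularForm Real Manifold Topology Pointwise
open Complex CongruenceSubgroup UpperHalfPlane

noncomputable section

/-- The natural embedding of `SL(2, ℤ)` into `GL (Fin 2) ℚ`. -/
def toGLQ : SL(2, ℤ) →* GL (Fin 2) ℚ :=
  Matrix.SpecialLinearGroup.toGL.comp (Matrix.SpecialLinearGroup.map (Int.castRingHom ℚ))

/-- The image in `GL (Fin 2) ℚ` of the conjugate `γ G γ⁻¹` of a subgroup `G` of `SL(2, ℤ)`
by the element `γ ∈ GL (Fin 2) ℚ`. -/
def conjQ (γ : GL (Fin 2) ℚ) (G : Subgroup SL(2, ℤ)) : Subgroup (GL (Fin 2) ℚ) :=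
  (G.map toGLQ).map (MulAut.conj γ).toMonoidHom

/-- The subgroup `γ G γ⁻¹ ∩ SL(2, ℤ)` of `SL(2, ℤ)`. -/
def conjSL (γ : GL (Fin 2) ℚ) (G : Subgroup SL(2, ℤ)) : Subgroup SL(2, ℤ) :=
  (conjQ γ G).comap toGLQ

theorem congruence_closure_invariant_under_conjugation
    (G Gc : Subgroup SL(2, ℤ)) (hG : G.index ≠ 0)
    (γ : GL (Fin 2) ℚ) (hdet : 0 < ((γ : Matrix (Fin 2) (Fin 2) ℚ)).det)
    (hconj : conjQ γ G = G.map toGLQ)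
    (hGc : IsCongruenceClosure G Gc)
    (h1 : ∃ H : Subgroup SL(2, ℤ), IsCongruenceSubgroup H ∧ H.map toGLQ ≤ conjQ γ⁻¹ Gc)
    (h2 : ∃ H : Subgroup SL(2, ℤ), IsCongruenceSubgroup H ∧ H.map toGLQ ≤ conjQ γ Gc) :
    conjQ γ Gc = Gc.map toGLQ := by
  obtain ⟨hGle, hGcCong, hmin⟩ := hGc
  obtain ⟨H1, hH1c, hH1le⟩ := h1
  obtain ⟨H2, hH2c, hH2le⟩ := h2
  have cancel : ∀ (δ : GL (Fin 2) ℚ) (X : Subgroup (GL (Fin 2) ℚ)),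
      Subgroup.map (MulAut.conj δ⁻¹).toMonoidHom
        (Subgroup.map (MulAut.conj δ).toMonoidHom X) = X := by
    intro δ X
    rw [Subgroup.map_map]
    convert Subgroup.map_id X using 2
    ext g
    simp [mul_assoc]
  have hmono : ∀ (δ : GL (Fin 2) ℚ), conjQ δ G ≤ conjQ δ Gc := fun δ =>
    Subgroup.map_mono (Subgroup.map_mono hGle)
  -- step using h2
  have hG2 : G ≤ conjSL γ Gc := by
    rw [conjSL, ← Subgroup.map_le_iff_le_comap, ← hconj]
    exact hmono γ
  have hK2cong : IsCongruenceSubgroup (conjSL γ Gc) :=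
    isCongruenceSubgroup_trans H2 _ (Subgroup.map_le_iff_le_comap.mp hH2le) hH2c
  have step2 : Gc.map toGLQ ≤ conjQ γ Gc :=
    Subgroup.map_le_iff_le_comap.mpr (hmin _ hG2 hK2cong)
  -- step using h1
  have hconj' : conjQ γ⁻¹ G = G.map toGLQ := by
    calc conjQ γ⁻¹ G = Subgroup.map (MulAut.conj γ⁻¹).toMonoidHom (conjQ γ G) := by
          rw [hconj]; rfl
      _ = G.map toGLQ := cancel γ _
  have hG1 : G ≤ conjSL γ⁻¹ Gc := by
    rw [conjSL, ← Subgroup.map_le_iff_le_comap, ← hconj']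
    exact hmono γ⁻¹
  have hK1cong : IsCongruenceSubgroup (conjSL γ⁻¹ Gc) :=
    isCongruenceSubgroup_trans H1 _ (Subgroup.map_le_iff_le_comap.mp hH1le) hH1c
  have step1 : Gc.map toGLQ ≤ conjQ γ⁻¹ Gc :=
    Subgroup.map_le_iff_le_comap.mpr (hmin _ hG1 hK1cong)
  refine le_antisymm ?_ step2
  calc conjQ γ Gc ≤ Subgroup.map (MulAut.conj γ).toMonoidHom (conjQ γ⁻¹ Gc) :=
        Subgroup.map_mono step1
    _ = Gc.map toGLQ := by
        have := cancel γ⁻¹ (Gc.map toGLQ)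
        rwa [inv_inv] at this
end
end

section
/- Let K be a positive integer, γ = [[1,0],[0,K]] ∈ GL₂(ℚ), and let G be a finite-index subgroup of SL₂(ℤ) contained in Γ₀(K). Then γ⁻¹Gγ is a subgroup of SL₂(ℤ) contained in Γ⁰(K), and the congruence closure of γ⁻¹Gγ equals γ⁻¹Gᶜγ, where Gᶜ is the congruence closure of G. -/
open scoped MatrixGroups ModularForm Real Manifold Topology Pointwise
open Complex CongruenceSubgroup UpperHalfPlane

noncomputable section

/-- The diagonal matrix `[[1, 0], [0, K]]` as an element of `GL (Fin 2) ℚ`. -/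
def diagK (K : ℕ) (hK : 0 < K) : GL (Fin 2) ℚ :=
  Matrix.GeneralLinearGroup.mkOfDetNeZero !![1, 0; 0, (K : ℚ)] (by
    simp [Matrix.det_fin_two_of]
    positivity)

variable (K : ℕ) (hK : 0 < K)

lemma toGLQ_coe (A : SL(2,ℤ)) (i j : Fin 2) : (toGLQ A : Matrix (Fin 2) (Fin 2) ℚ) i j = (A i j : ℚ) := rfl

lemma diagK_coe : ((diagK K hK : GL (Fin 2) ℚ) : Matrix (Fin 2) (Fin 2) ℚ) = !![1,0;0,(K:ℚ)] := rfl

lemma toGLQ_inj : Function.Injective toGLQ := by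
  intro A B h
  ext i j
  have := congrArg (fun m : GL (Fin 2) ℚ => (m : Matrix (Fin 2) (Fin 2) ℚ) i j) h
  have h2 : ((A i j : ℤ) : ℚ) = ((B i j : ℤ) : ℚ) := this
  exact_mod_cast h2

/-- `ConjRel K A B` means `toGLQ B = diagK * toGLQ A * diagK⁻¹`, i.e. `B = γ A γ⁻¹`. -/
def ConjRel (K : ℕ) (A B : SL(2,ℤ)) : Prop :=
  B 0 0 = A 0 0 ∧ A 0 1 = K * B 0 1 ∧ B 1 0 = K * A 1 0 ∧ B 1 1 = A 1 1

lemma rel_mul (A B : SL(2,ℤ)) (h : ConjRel K A B) :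
    toGLQ B * diagK K hK = diagK K hK * toGLQ A := by
  obtain ⟨h1, h2, h3, h4⟩ := h
  ext i j
  show ((toGLQ B : Matrix (Fin 2) (Fin 2) ℚ) * (diagK K hK : Matrix (Fin 2) (Fin 2) ℚ)) i j
      = ((diagK K hK : Matrix (Fin 2) (Fin 2) ℚ) * (toGLQ A : Matrix (Fin 2) (Fin 2) ℚ)) i j
  fin_cases i <;> fin_cases j <;>
    simp [Matrix.mul_apply, Fin.sum_univ_two, diagK_coe, toGLQ_coe] <;>
    push_cast [h1, h2, h3, h4] <;> ring

lemma rel_eq1 (A B : SL(2,ℤ)) (h : ConjRel K A B) :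
    toGLQ A = (diagK K hK)⁻¹ * toGLQ B * diagK K hK := by
  rw [mul_assoc, eq_inv_mul_iff_mul_eq]
  exact (rel_mul K hK A B h).symm

lemma rel_eq2 (A B : SL(2,ℤ)) (h : ConjRel K A B) :
    toGLQ B = diagK K hK * toGLQ A * (diagK K hK)⁻¹ := by
  rw [eq_mul_inv_iff_mul_eq, rel_mul K hK A B h]

/-- given `A` with `K ∣ A 0 1`, the matrix `γ A γ⁻¹ ∈ SL(2, ℤ)`. -/
def cup (A : SL(2,ℤ)) (h : (K:ℤ) ∣ A 0 1) : SL(2,ℤ) :=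
  ⟨!![A 0 0, A 0 1 / K; K * A 1 0, A 1 1], by
    have hd := A.2
    rw [Matrix.det_fin_two] at hd
    have h2 : A 0 1 / K * (K * A 1 0) = A 0 1 * A 1 0 := by
      rw [← mul_assoc, Int.ediv_mul_cancel h]
    rw [Matrix.det_fin_two_of, h2, hd]⟩

lemma rel_cup (A : SL(2,ℤ)) (h : (K:ℤ) ∣ A 0 1) : ConjRel K A (cup K A h) := by
  refine ⟨rfl, ?_, rfl, rfl⟩
  show A 0 1 = K * (A 0 1 / K)
  rw [Int.mul_ediv_cancel' h]

/-- given `B` with `K ∣ B 1 0`, the matrix `γ⁻¹ B γ ∈ SL(2, ℤ)`. -/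
def cdown (B : SL(2,ℤ)) (h : (K:ℤ) ∣ B 1 0) : SL(2,ℤ) :=
  ⟨!![B 0 0, K * B 0 1; B 1 0 / K, B 1 1], by
    have hd := B.2
    rw [Matrix.det_fin_two] at hd
    have h2 : K * B 0 1 * (B 1 0 / K) = B 0 1 * B 1 0 := by
      rw [mul_comm ((K:ℤ)) (B 0 1), mul_assoc, Int.mul_ediv_cancel' h]
    rw [Matrix.det_fin_two_of, h2, hd]⟩

lemma rel_cdown (B : SL(2,ℤ)) (h : (K:ℤ) ∣ B 1 0) : ConjRel K (cdown K B h) B := by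
  refine ⟨rfl, rfl, ?_, rfl⟩
  show B 1 0 = K * (B 1 0 / K)
  rw [Int.mul_ediv_cancel' h]

lemma rel_of_mul_eq (A B : SL(2,ℤ)) (h : toGLQ B * diagK K hK = diagK K hK * toGLQ A) :
    ConjRel K A B := by
  have hm : (toGLQ B : Matrix (Fin 2) (Fin 2) ℚ) * (diagK K hK : Matrix (Fin 2) (Fin 2) ℚ)
      = (diagK K hK : Matrix (Fin 2) (Fin 2) ℚ) * (toGLQ A : Matrix (Fin 2) (Fin 2) ℚ) :=
    congrArg Units.val h
  have e := fun i j => congrFun (congrFun hm i) j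
  have e00 := e 0 0; have e01 := e 0 1; have e10 := e 1 0; have e11 := e 1 1
  simp only [Matrix.mul_apply, Fin.sum_univ_two, diagK_coe, toGLQ_coe,
    Matrix.cons_val_zero, Matrix.cons_val_one, Matrix.head_cons, Matrix.head_fin_const,
    Matrix.of_apply, Matrix.cons_val', Matrix.empty_val', Matrix.cons_val_fin_one,
    one_mul, mul_one, zero_mul, mul_zero, add_zero, zero_add] at e00 e01 e10 e11
  have hK0 : (K:ℚ) ≠ 0 := by positivity
  rw [mul_comm ((K:ℚ)) _] at e11
  have e11' : ((B 1 1 : ℤ):ℚ) = ((A 1 1 : ℤ):ℚ) := mul_right_cancel₀ hK0 e11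
  rw [mul_comm] at e01
  refine ⟨by exact_mod_cast e00, by exact_mod_cast e01.symm, by exact_mod_cast e10,
    by exact_mod_cast e11'⟩

include hK in
lemma conjRel_unique {A A' B : SL(2,ℤ)} (h : ConjRel K A B) (h' : ConjRel K A' B) : A = A' :=
  toGLQ_inj ((rel_eq1 K hK A B h).trans (rel_eq1 K hK A' B h').symm)

lemma mem_conjQ_inv_iff (G : Subgroup SL(2,ℤ)) (y : GL (Fin 2) ℚ) :
    y ∈ conjQ (diagK K hK)⁻¹ G ↔ ∃ g ∈ G, toGLQ g * diagK K hK = diagK K hK * y := by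
  constructor
  · rintro ⟨-, ⟨g, hg, rfl⟩, rfl⟩
    refine ⟨g, hg, ?_⟩
    simp only [MulEquiv.coe_toMonoidHom, MulAut.conj_apply, inv_inv]
    group
  · rintro ⟨g, hg, hrel⟩
    refine ⟨toGLQ g, ⟨g, hg, rfl⟩, ?_⟩
    simp only [MulEquiv.coe_toMonoidHom, MulAut.conj_apply, inv_inv]
    rw [mul_assoc, hrel, inv_mul_cancel_left]

lemma mem_conjSL_inv_iff (G : Subgroup SL(2,ℤ)) (x : SL(2,ℤ)) :
    x ∈ conjSL (diagK K hK)⁻¹ G ↔ ∃ g ∈ G, ConjRel K x g := by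
  rw [conjSL, Subgroup.mem_comap, mem_conjQ_inv_iff]
  constructor
  · rintro ⟨g, hg, h⟩
    exact ⟨g, hg, rel_of_mul_eq K hK x g h⟩
  · rintro ⟨g, hg, h⟩
    exact ⟨g, hg, rel_mul K hK x g h⟩

lemma mem_conjQ_iff (G : Subgroup SL(2,ℤ)) (y : GL (Fin 2) ℚ) :
    y ∈ conjQ (diagK K hK) G ↔ ∃ g ∈ G, diagK K hK * toGLQ g = y * diagK K hK := by
  constructor
  · rintro ⟨-, ⟨g, hg, rfl⟩, rfl⟩
    refine ⟨g, hg, ?_⟩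
    simp only [MulEquiv.coe_toMonoidHom, MulAut.conj_apply]
    group
  · rintro ⟨g, hg, hrel⟩
    refine ⟨toGLQ g, ⟨g, hg, rfl⟩, ?_⟩
    simp only [MulEquiv.coe_toMonoidHom, MulAut.conj_apply]
    rw [hrel, mul_inv_cancel_right]

lemma mem_conjSL_iff (H : Subgroup SL(2,ℤ)) (x : SL(2,ℤ)) :
    x ∈ conjSL (diagK K hK) H ↔ ∃ h ∈ H, ConjRel K h x := by
  rw [conjSL, Subgroup.mem_comap, mem_conjQ_iff]
  constructor
  · rintro ⟨h, hh, hrel⟩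
    exact ⟨h, hh, rel_of_mul_eq K hK h x hrel.symm⟩
  · rintro ⟨h, hh, hrel⟩
    exact ⟨h, hh, (rel_mul K hK h x hrel).symm⟩

lemma int_dvd_of_zmod {M : ℕ} {a : ℤ} (h : (a : ZMod M) = 0) : (M:ℤ) ∣ a :=
  (ZMod.intCast_zmod_eq_zero_iff_dvd _ _).mp h

lemma zmod_of_int_dvd {M : ℕ} {a : ℤ} (h : (M:ℤ) ∣ a) : (a : ZMod M) = 0 :=
  (ZMod.intCast_zmod_eq_zero_iff_dvd _ _).mpr h

lemma int_dvd_of_zmod_one {M : ℕ} {a : ℤ} (h : (a : ZMod M) = 1) : (M:ℤ) ∣ (a - 1) := by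
  refine int_dvd_of_zmod ?_
  push_cast
  rw [h, sub_self]

lemma zmod_one_of_int_dvd {M : ℕ} {a : ℤ} (h : (M:ℤ) ∣ (a - 1)) : (a : ZMod M) = 1 := by
  have := zmod_of_int_dvd h
  push_cast at this
  linear_combination this

lemma conjQ_inv_le_range (G : Subgroup SL(2,ℤ)) (hG0 : G ≤ Gamma0 K) :
    conjQ (diagK K hK)⁻¹ G ≤ toGLQ.range := by
  intro y hy
  rw [mem_conjQ_inv_iff] at hy
  obtain ⟨g, hg, hrel⟩ := hy
  have hdvd : (K:ℤ) ∣ g 1 0 := int_dvd_of_zmod (hG0 hg)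
  refine ⟨cdown K g hdvd, ?_⟩
  have h2 := rel_mul K hK (cdown K g hdvd) g (rel_cdown K g hdvd)
  exact mul_left_cancel (h2.symm.trans hrel)

lemma cup_entries (A : SL(2,ℤ)) (h : (K:ℤ) ∣ A 0 1) :
    (cup K A h) 0 0 = A 0 0 ∧ (cup K A h) 0 1 = A 0 1 / K ∧
    (cup K A h) 1 0 = K * A 1 0 ∧ (cup K A h) 1 1 = A 1 1 := by
  refine ⟨rfl, rfl, rfl, rfl⟩

lemma cdown_entries (B : SL(2,ℤ)) (h : (K:ℤ) ∣ B 1 0) :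
    (cdown K B h) 0 0 = B 0 0 ∧ (cdown K B h) 0 1 = K * B 0 1 ∧
    (cdown K B h) 1 0 = B 1 0 / K ∧ (cdown K B h) 1 1 = B 1 1 := by
  refine ⟨rfl, rfl, rfl, rfl⟩

theorem congruence_closure_of_conjugate_by_diagonal
    (K : ℕ) (hK : 0 < K)
    (G : Subgroup SL(2, ℤ)) (hGfin : G.index ≠ 0) (hG0 : G ≤ Gamma0 K)
    (Gc : Subgroup SL(2, ℤ)) (hGc : IsCongruenceClosure G Gc) :
    ∃ G' Gc' : Subgroup SL(2, ℤ),
      G'.map toGLQ = conjQ (diagK K hK)⁻¹ G ∧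
      (∀ x ∈ G', (K : ℤ) ∣ x 0 1) ∧
      Gc'.map toGLQ = conjQ (diagK K hK)⁻¹ Gc ∧
      IsCongruenceClosure G' Gc' := by
  have hK0 : (K:ℤ) ≠ 0 := by positivity
  have hGc0 : Gc ≤ Gamma0 K := by
    refine hGc.2.2 (Gamma0 K) hG0 ?_
    exact @Gamma0_is_congruence K ⟨hK.ne'⟩
  refine ⟨conjSL (diagK K hK)⁻¹ G, conjSL (diagK K hK)⁻¹ Gc,
    Subgroup.map_comap_eq_self (conjQ_inv_le_range K hK G hG0), ?_,
    Subgroup.map_comap_eq_self (conjQ_inv_le_range K hK Gc hGc0), ?_, ?_, ?_⟩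
  · -- K ∣ x 0 1
    intro x hx
    rw [mem_conjSL_inv_iff] at hx
    obtain ⟨g, hg, hrel⟩ := hx
    exact ⟨g 0 1, hrel.2.1⟩
  · -- G' ≤ Gc'
    intro x hx
    rw [mem_conjSL_inv_iff] at hx ⊢
    obtain ⟨g, hg, hrel⟩ := hx
    exact ⟨g, hGc.1 hg, hrel⟩
  · -- Gc' is congruence
    obtain ⟨N, hN0, hN⟩ := hGc.2.1
    refine ⟨N * K, Nat.mul_ne_zero hN0 hK.ne', ?_⟩
    intro x hx
    rw [Gamma_mem] at hx
    have hNK : ((N * K : ℕ) : ℕ) = (N : ℕ) * K := rfl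
    rw [hNK] at hx
    obtain ⟨hx00, hx01, hx10, hx11⟩ := hx
    have h00 : ((N:ℕ) * K : ℤ) ∣ (x 0 0 - 1) := by exact_mod_cast int_dvd_of_zmod_one hx00
    have h01 : ((N:ℕ) * K : ℤ) ∣ x 0 1 := by exact_mod_cast int_dvd_of_zmod hx01
    have h10 : ((N:ℕ) * K : ℤ) ∣ x 1 0 := by exact_mod_cast int_dvd_of_zmod hx10
    have h11 : ((N:ℕ) * K : ℤ) ∣ (x 1 1 - 1) := by exact_mod_cast int_dvd_of_zmod_one hx11
    push_cast at h00 h01 h10 h11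
    have hb : (K:ℤ) ∣ x 0 1 := (dvd_mul_left _ _).trans h01
    set g := cup K x hb with hgdef
    rw [mem_conjSL_inv_iff]
    refine ⟨g, hN ?_, rel_cup K x hb⟩
    rw [Gamma_mem]
    obtain ⟨e00, e01, e10, e11⟩ := cup_entries K x hb
    rw [e00, e01, e10, e11]
    have d00 : ((N:ℕ):ℤ) ∣ (x 0 0 - 1) := (dvd_mul_right _ _).trans h00
    have d11 : ((N:ℕ):ℤ) ∣ (x 1 1 - 1) := (dvd_mul_right _ _).trans h11
    have d10 : ((N:ℕ):ℤ) ∣ (K * x 1 0) := ((dvd_mul_right _ _).trans h10).mul_left _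
    have d01 : ((N:ℕ):ℤ) ∣ (x 0 1 / K) := by
      obtain ⟨c, hc⟩ := h01
      refine ⟨c, ?_⟩
      have : x 0 1 = (K:ℤ) * ((N:ℕ) * c) := by rw [hc]; ring
      rw [this, Int.mul_ediv_cancel_left _ hK0]
    exact ⟨zmod_one_of_int_dvd d00, zmod_of_int_dvd d01, zmod_of_int_dvd d10,
      zmod_one_of_int_dvd d11⟩
  · -- minimality
    intro H hGH hHcong
    have hH1 : G ≤ conjSL (diagK K hK) H := by
      intro g hg
      have hdvd : (K:ℤ) ∣ g 1 0 := int_dvd_of_zmod (hG0 hg)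
      rw [mem_conjSL_iff]
      refine ⟨cdown K g hdvd, hGH ?_, rel_cdown K g hdvd⟩
      rw [mem_conjSL_inv_iff]
      exact ⟨g, hg, rel_cdown K g hdvd⟩
    have hH2 : IsCongruenceSubgroup (conjSL (diagK K hK) H) := by
      obtain ⟨M, hM0, hM⟩ := hHcong
      refine ⟨M * K, Nat.mul_ne_zero hM0 hK.ne', ?_⟩
      intro x hx
      rw [Gamma_mem] at hx
      have hMK : ((M * K : ℕ) : ℕ) = (M : ℕ) * K := rfl
      rw [hMK] at hx
      obtain ⟨hx00, hx01, hx10, hx11⟩ := hx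
      have h00 : ((M:ℕ) * K : ℤ) ∣ (x 0 0 - 1) := by exact_mod_cast int_dvd_of_zmod_one hx00
      have h01 : ((M:ℕ) * K : ℤ) ∣ x 0 1 := by exact_mod_cast int_dvd_of_zmod hx01
      have h10 : ((M:ℕ) * K : ℤ) ∣ x 1 0 := by exact_mod_cast int_dvd_of_zmod hx10
      have h11 : ((M:ℕ) * K : ℤ) ∣ (x 1 1 - 1) := by exact_mod_cast int_dvd_of_zmod_one hx11
      push_cast at h00 h01 h10 h11
      have hc : (K:ℤ) ∣ x 1 0 := (dvd_mul_left _ _).trans h10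
      rw [mem_conjSL_iff]
      refine ⟨cdown K x hc, hM ?_, rel_cdown K x hc⟩
      rw [Gamma_mem]
      obtain ⟨e00, e01, e10, e11⟩ := cdown_entries K x hc
      rw [e00, e01, e10, e11]
      have d00 : ((M:ℕ):ℤ) ∣ (x 0 0 - 1) := (dvd_mul_right _ _).trans h00
      have d11 : ((M:ℕ):ℤ) ∣ (x 1 1 - 1) := (dvd_mul_right _ _).trans h11
      have d01 : ((M:ℕ):ℤ) ∣ (K * x 0 1) := ((dvd_mul_right _ _).trans h01).mul_left _
      have d10 : ((M:ℕ):ℤ) ∣ (x 1 0 / K) := by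
        obtain ⟨c, hcc⟩ := h10
        refine ⟨c, ?_⟩
        have : x 1 0 = (K:ℤ) * ((M:ℕ) * c) := by rw [hcc]; ring
        rw [this, Int.mul_ediv_cancel_left _ hK0]
      exact ⟨zmod_one_of_int_dvd d00, zmod_of_int_dvd d01, zmod_of_int_dvd d10,
        zmod_one_of_int_dvd d11⟩
    have hGcH : Gc ≤ conjSL (diagK K hK) H := hGc.2.2 _ hH1 hH2
    intro x hx
    rw [mem_conjSL_inv_iff] at hx
    obtain ⟨g, hg, hrel⟩ := hx
    have := hGcH hg
    rw [mem_conjSL_iff] at this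
    obtain ⟨h, hh, hrel2⟩ := this
    rwa [conjRel_unique K hK hrel hrel2]
end
end
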